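/- arXiv:1409.5565 — 3 statements merged into one kernel-verified Lean document; each statement's English description precedes it below -/
import Mathlib

section
/- Let e ∈ S be an idempotent and let λ ∈ J_e^* be regular in J_e^*. Then for every group homomorphism θ : H_{e'} → ℂ^×, the induced character χ_{θ,λ} is constant on superclasses: for all g ∈ G, t ∈ H and a, b ∈ N one has χ_{θ,λ}(1 + t·a·(g − 1)·b·t⁻¹) = χ_{θ,λ}(g). -/
/-- `h ∈ H = S^×`: `h` lies in `S` and is invertible with inverse in `S`. -/
def MemH {F A : Type*} [Field F] [Ring A] [Algebra F A]
    (S : Subalgebra F A) (h : A) : Prop :=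
  h ∈ S ∧ ∃ h' ∈ S, h * h' = 1 ∧ h' * h = 1

/-- `h ∈ H_{e'} = {h ∈ H : h * e = e * h = e}`. -/
def MemHePrime {F A : Type*} [Field F] [Ring A] [Algebra F A]
    (S : Subalgebra F A) (e h : A) : Prop :=
  MemH S h ∧ h * e = e ∧ e * h = e

/-- The set `G_λ = {h + x : h ∈ H_{e'}, x ∈ J, λ(xu) = 0 for all u ∈ J}`. -/
def GlamSet {F A : Type*} [Field F] [Ring A] [Algebra F A]
    (J : Ideal A) (hJr : ∀ x ∈ J, ∀ a : A, x * a ∈ J) (S : Subalgebra F A) (e : A)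
    (lam : (Submodule.restrictScalars F J) →ₗ[F] F) : Set A :=
  {g | ∃ h x : A, MemHePrime S e h ∧
    (∃ hx : x ∈ J, ∀ u (_ : u ∈ J), lam ⟨x * u, hJr x hx u⟩ = 0) ∧ g = h + x}

/-- The linear character `ξ_{θ,λ}(h + x) = θ(h) · ε(λ(x))`, written using the projections
onto `S` and `J` coming from the decomposition `A = S ⊕ J`. -/
noncomputable def xiFun {F A : Type*} [Field F] [Ring A] [Algebra F A]
    (J : Ideal A) (S : Subalgebra F A)
    (hS : IsCompl (Subalgebra.toSubmodule S) (Submodule.restrictScalars F J))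
    (θ : A → ℂ) (ε : F → ℂ)
    (lam : (Submodule.restrictScalars F J) →ₗ[F] F) (g : A) : ℂ :=
  θ ((Submodule.linearProjOfIsCompl _ _ hS g : A)) *
    ε (lam (Submodule.linearProjOfIsCompl _ _ hS.symm g))

/-- The induced (super)character `χ_{θ,λ}(g) = |G_λ|⁻¹ · Σ_{s ∈ G, s⁻¹gs ∈ G_λ} ξ(s⁻¹gs)`,
where `G = Aˣ`. -/
noncomputable def chiFun {F A : Type*} [Field F] [Ring A] [Algebra F A]
    (J : Ideal A) (hJr : ∀ x ∈ J, ∀ a : A, x * a ∈ J) (S : Subalgebra F A)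
    (hS : IsCompl (Subalgebra.toSubmodule S) (Submodule.restrictScalars F J))
    (e : A) (θ : A → ℂ) (ε : F → ℂ)
    (lam : (Submodule.restrictScalars F J) →ₗ[F] F) (g : A) : ℂ :=
  (Nat.card (GlamSet J hJr S e lam) : ℂ)⁻¹ *
    ∑ᶠ s ∈ {s : Aˣ | ((s⁻¹ : Aˣ) : A) * g * (s : A) ∈ GlamSet J hJr S e lam},
      xiFun J S hS θ ε lam (((s⁻¹ : Aˣ) : A) * g * (s : A))


open scoped Classical

section Main
variable {F A : Type*} [Field F] [Ring A] [Algebra F A]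
variable (J : Ideal A)
variable (S : Subalgebra F A)

/-- projection onto `S` -/
noncomputable def Pproj (hS : IsCompl (Subalgebra.toSubmodule S) (Submodule.restrictScalars F J)) :
    A →ₗ[F] ↥(Subalgebra.toSubmodule S) :=
  Submodule.linearProjOfIsCompl _ _ hS

/-- projection onto `J` -/
noncomputable def Qproj (hS : IsCompl (Subalgebra.toSubmodule S) (Submodule.restrictScalars F J)) :
    A →ₗ[F] ↥(Submodule.restrictScalars F J) :=
  Submodule.linearProjOfIsCompl _ _ hS.symm

/-- The summand function in the Fourier-expanded form of `chiFun`. -/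
noncomputable def Phi (hJr : ∀ x ∈ J, ∀ a : A, x * a ∈ J)
    (hS : IsCompl (Subalgebra.toSubmodule S) (Submodule.restrictScalars F J))
    (e : A) (θ : A → ℂ) (ε : F → ℂ)
    (lam : (Submodule.restrictScalars F J) →ₗ[F] F)
    (m : A) (v : ↥(Submodule.restrictScalars F J)) : ℂ :=
  if MemHePrime S e ((Pproj J S hS m : A)) then
    θ ((Pproj J S hS m : A)) *
      ε (lam ⟨((Qproj J S hS m : A)) * (1 + (v : A)),
          hJr _ (Qproj J S hS m).2 _⟩)
  else 0

variable (hJr : ∀ x ∈ J, ∀ a : A, x * a ∈ J)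
variable (hS : IsCompl (Subalgebra.toSubmodule S) (Submodule.restrictScalars F J))
variable (e : A) (lam : (Submodule.restrictScalars F J) →ₗ[F] F)

theorem hPQ_aux : ∀ m : A, ((Pproj J S hS m : A)) + ((Qproj J S hS m : A)) = m := fun m =>
  Submodule.projection_add_projection_eq_self hS m

theorem hQval_aux : ∀ m : A, ((Qproj J S hS m : A)) = m - ((Pproj J S hS m : A)) :=
  fun m => eq_sub_of_add_eq' (hPQ_aux J S hS m)

theorem hPdiff_aux : ∀ m₁ m₂ : A, m₁ - m₂ ∈ J → Pproj J S hS m₁ = Pproj J S hS m₂ := by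
  intro m₁ m₂ hmm
  have h0 : Pproj J S hS (m₁ - m₂) = 0 :=
    Submodule.projectionOnto_apply_of_mem_right hS hmm
  have := map_sub (Pproj J S hS) m₁ m₂
  rw [h0] at this
  exact (sub_eq_zero.mp this.symm)

theorem hGL_aux : ∀ m : A, m ∈ GlamSet J hJr S e lam ↔
    (MemHePrime S e ((Pproj J S hS m : A)) ∧
      ∀ u (hu : u ∈ J), lam ⟨((Qproj J S hS m : A)) * u, hJr _ (Qproj J S hS m).2 u⟩ = 0) := by
  intro m
  constructor
  · rintro ⟨h', x', hh', ⟨hx', hl⟩, rfl⟩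
    have hPh : ((Pproj J S hS (h' + x') : A)) = h' := by
      have h1 : Pproj J S hS h' = ⟨h', hh'.1.1⟩ :=
        Submodule.linearProjOfIsCompl_apply_left hS ⟨h', hh'.1.1⟩
      have h2 : Pproj J S hS x' = 0 := Submodule.projectionOnto_apply_of_mem_right hS hx'
      rw [map_add, h1, h2, add_zero]
    have hQx : ((Qproj J S hS (h' + x') : A)) = x' := by
      rw [hQval_aux, hPh]; abel
    refine ⟨by rw [hPh]; exact hh', fun u hu => ?_⟩
    have heq : (⟨((Qproj J S hS (h' + x') : A)) * u, hJr _ (Qproj J S hS (h' + x')).2 u⟩ :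
        ↥(Submodule.restrictScalars F J)) = ⟨x' * u, hJr x' hx' u⟩ :=
      Subtype.ext (by show ((Qproj J S hS (h' + x') : A)) * u = x' * u; rw [hQx])
    rw [heq]
    exact hl u hu
  · rintro ⟨h1, h2⟩
    exact ⟨(Pproj J S hS m : A), (Qproj J S hS m : A), h1, ⟨(Qproj J S hS m).2, h2⟩,
      (hPQ_aux J S hS m).symm⟩

theorem claim1_aux [Fintype ↥(Submodule.restrictScalars F J)]
    (θ : A → ℂ) (ε : F → ℂ) (hεadd : ∀ a b : F, ε (a + b) = ε a * ε b) (hε0 : ε 0 = 1)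
    (hεnt : ∃ a : F, ε a ≠ 1) :
    ∀ m : A, (if m ∈ GlamSet J hJr S e lam then xiFun J S hS θ ε lam m else 0) *
        (Fintype.card ↥(Submodule.restrictScalars F J) : ℂ) =
      ∑ v : ↥(Submodule.restrictScalars F J), Phi J S hJr hS e θ ε lam m v := by
  intro m
  by_cases hh : MemHePrime S e ((Pproj J S hS m : A))
  · by_cases hx : ∀ u (hu : u ∈ J),
        lam ⟨((Qproj J S hS m : A)) * u, hJr _ (Qproj J S hS m).2 u⟩ = 0
    · have hmem : m ∈ GlamSet J hJr S e lam := (hGL_aux J S hJr hS e lam m).mpr ⟨hh, hx⟩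
      rw [if_pos hmem]
      have hterm : ∀ v, Phi J S hJr hS e θ ε lam m v =
          θ ((Pproj J S hS m : A)) * ε (lam (Qproj J S hS m)) := by
        intro v
        unfold Phi
        rw [if_pos hh]
        congr 1
        congr 1
        have hsplit : (⟨((Qproj J S hS m : A)) * (1 + (v : A)),
            hJr _ (Qproj J S hS m).2 _⟩ : ↥(Submodule.restrictScalars F J)) =
            Qproj J S hS m + ⟨((Qproj J S hS m : A)) * (v : A), hJr _ (Qproj J S hS m).2 _⟩ := by
          apply Subtype.ext
          show ((Qproj J S hS m : A)) * (1 + (v : A)) =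
            ((Qproj J S hS m : A)) + ((Qproj J S hS m : A)) * (v : A)
          rw [mul_add, mul_one]
        rw [hsplit, map_add, hx _ v.2, add_zero]
      rw [Finset.sum_congr rfl (fun v _ => hterm v), Finset.sum_const, Finset.card_univ]
      show xiFun J S hS θ ε lam m * _ = _
      unfold xiFun Pproj Qproj
      rw [nsmul_eq_mul]
      ring
    · have hnmem : m ∉ GlamSet J hJr S e lam := fun hm =>
        hx ((hGL_aux J S hJr hS e lam m).mp hm).2
      rw [if_neg hnmem, zero_mul]
      symm
      push_neg at hx
      obtain ⟨u₁, hu₁, hne⟩ := hx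
      obtain ⟨a₀, ha₀⟩ := hεnt
      set c : F := lam ⟨((Qproj J S hS m : A)) * u₁, hJr _ (Qproj J S hS m).2 u₁⟩ with hc
      set u₀ : ↥(Submodule.restrictScalars F J) := (a₀ * c⁻¹) • ⟨u₁, hu₁⟩ with hu₀
      have hshift : ∀ v, Phi J S hJr hS e θ ε lam m (v + u₀) =
          Phi J S hJr hS e θ ε lam m v * ε a₀ := by
        intro v
        unfold Phi
        rw [if_pos hh, if_pos hh]
        have harg : (⟨((Qproj J S hS m : A)) * (1 + ((v + u₀ : ↥(Submodule.restrictScalars F J)) : A)),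
            hJr _ (Qproj J S hS m).2 _⟩ : ↥(Submodule.restrictScalars F J)) =
            ⟨((Qproj J S hS m : A)) * (1 + (v : A)), hJr _ (Qproj J S hS m).2 _⟩ +
              (a₀ * c⁻¹) • ⟨((Qproj J S hS m : A)) * u₁, hJr _ (Qproj J S hS m).2 u₁⟩ := by
          apply Subtype.ext
          show ((Qproj J S hS m : A)) * (1 + ((v : A) + (a₀ * c⁻¹) • u₁)) =
            ((Qproj J S hS m : A)) * (1 + (v : A)) + (a₀ * c⁻¹) • (((Qproj J S hS m : A)) * u₁)
          rw [mul_add, mul_add, mul_add, mul_smul_comm]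
          abel
        rw [harg, map_add, map_smul, smul_eq_mul, ← hc, inv_mul_cancel_right₀ hne, hεadd]
        ring
      have h1 : ∑ v, Phi J S hJr hS e θ ε lam m (v + u₀) =
          ∑ v, Phi J S hJr hS e θ ε lam m v :=
        Fintype.sum_equiv (Equiv.addRight u₀) _ _ (fun v => rfl)
      have h2 : ∑ v, Phi J S hJr hS e θ ε lam m v =
          (∑ v, Phi J S hJr hS e θ ε lam m v) * ε a₀ := by
        conv_lhs => rw [← h1]
        rw [Finset.sum_congr rfl (fun v _ => hshift v), ← Finset.sum_mul]
      have h3 : (∑ v, Phi J S hJr hS e θ ε lam m v) * (1 - ε a₀) = 0 := by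
        rw [mul_sub, mul_one, ← h2, sub_self]
      rcases mul_eq_zero.mp h3 with h | h
      · exact h
      · exact absurd (sub_eq_zero.mp h).symm ha₀
  · have hnmem : m ∉ GlamSet J hJr S e lam := fun hm =>
      hh ((hGL_aux J S hJr hS e lam m).mp hm).1
    rw [if_neg hnmem, zero_mul]
    symm
    apply Finset.sum_eq_zero
    intro v _
    unfold Phi
    rw [if_neg hh]

theorem claim2_aux [Fintype Aˣ] [Fintype ↥(Submodule.restrictScalars F J)]
    (θ : A → ℂ) (ε : F → ℂ) (hεadd : ∀ a b : F, ε (a + b) = ε a * ε b) (hε0 : ε 0 = 1)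
    (hεnt : ∃ a : F, ε a ≠ 1) (X : A) :
    (∑ᶠ s ∈ {s : Aˣ | ((s⁻¹ : Aˣ) : A) * X * (s : A) ∈ GlamSet J hJr S e lam},
        xiFun J S hS θ ε lam (((s⁻¹ : Aˣ) : A) * X * (s : A))) *
      (Fintype.card ↥(Submodule.restrictScalars F J) : ℂ) =
    ∑ s : Aˣ, ∑ v : ↥(Submodule.restrictScalars F J),
      Phi J S hJr hS e θ ε lam (((s⁻¹ : Aˣ) : A) * X * (s : A)) v := by
  have h0 : (∑ᶠ s ∈ {s : Aˣ | ((s⁻¹ : Aˣ) : A) * X * (s : A) ∈ GlamSet J hJr S e lam},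
      xiFun J S hS θ ε lam (((s⁻¹ : Aˣ) : A) * X * (s : A))) =
      ∑ s : Aˣ, if ((s⁻¹ : Aˣ) : A) * X * (s : A) ∈ GlamSet J hJr S e lam then
        xiFun J S hS θ ε lam (((s⁻¹ : Aˣ) : A) * X * (s : A)) else 0 := by
    rw [finsum_mem_def, ← finsum_eq_sum_of_fintype]
    exact finsum_congr fun s => Set.indicator_apply _ _ _
  rw [h0, Finset.sum_mul]
  exact Finset.sum_congr rfl fun s _ =>
    claim1_aux J S hJr hS e lam θ ε hεadd hε0 hεnt _

include hJr in
theorem hconjJ_aux : ∀ (s : Aˣ) (y : A), y ∈ J → ((s⁻¹ : Aˣ) : A) * y * (s : A) ∈ J :=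
  fun s y hy => hJr _ (J.mul_mem_left _ hy) _

include hJr in
theorem hdconj_aux (d : Aˣ) (hd : (d : A) - 1 ∈ J) :
    ∀ s : Aˣ, ((s⁻¹ * d * s : Aˣ) : A) - 1 ∈ J := by
  intro s
  have h : ((s⁻¹ : Aˣ) : A) * ((d : A) - 1) * (s : A) = ((s⁻¹ * d * s : Aˣ) : A) - 1 := by
    rw [Units.val_mul, Units.val_mul, mul_sub, mul_one, sub_mul, Units.inv_mul]
  rw [← h]
  exact hconjJ_aux J hJr s _ hd

include hJr in
theorem hmemJ_aux (c : Aˣ) (hc : (c : A) - 1 ∈ J) (v : ↥(Submodule.restrictScalars F J)) :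
    (c : A) * (1 + (v : A)) - 1 ∈ J := by
  have h : (c : A) * (1 + (v : A)) - 1 = ((c : A) - 1) * (1 + (v : A)) + (v : A) := by
    noncomm_ring
  rw [h]
  exact J.add_mem (hJr _ hc _) v.2

include hJr in
theorem claim3_term
    (hlam : ∀ x (hx : x ∈ J), lam ⟨x, hx⟩ = lam ⟨e * x * e, hJr _ (J.mul_mem_left e hx) e⟩)
    (θ : A → ℂ) (ε : F → ℂ)
    (g d s : Aˣ) (hd : (d : A) - 1 ∈ J) (v : ↥(Submodule.restrictScalars F J)) :
    Phi J S hJr hS e θ ε lam (((s⁻¹ : Aˣ) : A) * (1 + (d : A) * ((g : A) - 1)) * (s : A)) v =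
    Phi J S hJr hS e θ ε lam ((((d⁻¹ * s)⁻¹ : Aˣ) : A) * (g : A) * ((d⁻¹ * s : Aˣ) : A))
      ⟨((s⁻¹ * d * s : Aˣ) : A) * (1 + (v : A)) - 1,
        hmemJ_aux J hJr _ (hdconj_aux J hJr d hd s) v⟩ := by
  have hm₂' : (((d⁻¹ * s)⁻¹ : Aˣ) : A) * (g : A) * ((d⁻¹ * s : Aˣ) : A) =
      ((s⁻¹ : Aˣ) : A) * (d : A) * (g : A) * ((d⁻¹ : Aˣ) : A) * (s : A) := by
    have hσinv : ((d⁻¹ * s : Aˣ))⁻¹ = s⁻¹ * d := by group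
    rw [hσinv, Units.val_mul, Units.val_mul]
    simp [mul_assoc]
  have hP : Pproj J S hS (((s⁻¹ : Aˣ) : A) * (1 + (d : A) * ((g : A) - 1)) * (s : A)) =
      Pproj J S hS ((((d⁻¹ * s)⁻¹ : Aˣ) : A) * (g : A) * ((d⁻¹ * s : Aˣ) : A)) := by
    apply hPdiff_aux
    have hdd : ((d⁻¹ : Aˣ) : A) * (d : A) = 1 := Units.inv_mul d
    have hXJ : (1 + (d : A) * ((g : A) - 1)) - (d : A) * (g : A) * ((d⁻¹ : Aˣ) : A) ∈ J := by
      have hexp : ((d:A)*(g:A)*((d⁻¹:Aˣ):A) - 1) * ((d:A) - 1)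
          = (d:A)*(g:A)*(((d⁻¹:Aˣ):A) * (d:A)) - (d:A)*(g:A)*((d⁻¹:Aˣ):A) - (d:A) + 1 := by
        noncomm_ring
      rw [hdd, mul_one] at hexp
      have heq2 : (1 + (d : A) * ((g : A) - 1)) - (d : A) * (g : A) * ((d⁻¹ : Aˣ) : A)
          = ((d:A)*(g:A)*((d⁻¹:Aˣ):A) - 1) * ((d:A) - 1) := by
        rw [hexp]; noncomm_ring
      rw [heq2]
      exact J.mul_mem_left _ hd
    have heq3 : (((s⁻¹ : Aˣ) : A) * (1 + (d : A) * ((g : A) - 1)) * (s : A)) -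
        ((((d⁻¹ * s)⁻¹ : Aˣ) : A) * (g : A) * ((d⁻¹ * s : Aˣ) : A)) =
        ((s⁻¹ : Aˣ) : A) *
          ((1 + (d : A) * ((g : A) - 1)) - (d : A) * (g : A) * ((d⁻¹ : Aˣ) : A)) * (s : A) := by
      rw [hm₂']; noncomm_ring
    rw [heq3]
    exact hconjJ_aux J hJr s _ hXJ
  unfold Phi
  rw [hP]
  by_cases hcond : MemHePrime S e
      ((Pproj J S hS ((((d⁻¹ * s)⁻¹ : Aˣ) : A) * (g : A) * ((d⁻¹ * s : Aˣ) : A)) : A))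
  · rw [if_pos hcond, if_pos hcond]
    congr 1
    refine congrArg ε ?_
    -- notation
    have hQ2 : ((Qproj J S hS ((((d⁻¹ * s)⁻¹ : Aˣ) : A) * (g : A) * ((d⁻¹ * s : Aˣ) : A)) : A))
        = ((((d⁻¹ * s)⁻¹ : Aˣ) : A) * (g : A) * ((d⁻¹ * s : Aˣ) : A)) -
          ((Pproj J S hS ((((d⁻¹ * s)⁻¹ : Aˣ) : A) * (g : A) * ((d⁻¹ * s : Aˣ) : A)) : A)) :=
      hQval_aux J S hS _
    have hQ1 : ((Qproj J S hS (((s⁻¹ : Aˣ) : A) * (1 + (d : A) * ((g : A) - 1)) * (s : A)) : A))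
        = (((s⁻¹ : Aˣ) : A) * (1 + (d : A) * ((g : A) - 1)) * (s : A)) -
          ((Pproj J S hS ((((d⁻¹ * s)⁻¹ : Aˣ) : A) * (g : A) * ((d⁻¹ * s : Aˣ) : A)) : A)) := by
      rw [hQval_aux, hP]
    have hzmem : (1 - ((Pproj J S hS
          ((((d⁻¹ * s)⁻¹ : Aˣ) : A) * (g : A) * ((d⁻¹ * s : Aˣ) : A)) : A))) *
        ((((s⁻¹ * d * s : Aˣ) : A) - 1) * (1 + (v : A))) ∈ J :=
      J.mul_mem_left _ (hJr _ (hdconj_aux J hJr d hd s) _)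
    have hbig : ((Qproj J S hS ((((d⁻¹ * s)⁻¹ : Aˣ) : A) * (g : A) * ((d⁻¹ * s : Aˣ) : A)) : A)) *
        (1 + (((s⁻¹ * d * s : Aˣ) : A) * (1 + (v : A)) - 1)) =
        ((Qproj J S hS (((s⁻¹ : Aˣ) : A) * (1 + (d : A) * ((g : A) - 1)) * (s : A)) : A)) *
          (1 + (v : A)) +
        (1 - ((Pproj J S hS
            ((((d⁻¹ * s)⁻¹ : Aˣ) : A) * (g : A) * ((d⁻¹ * s : Aˣ) : A)) : A))) *
          ((((s⁻¹ * d * s : Aˣ) : A) - 1) * (1 + (v : A))) := by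
      rw [hQ1, hQ2, hm₂']
      have hn2 : (1:A) + (((s⁻¹ * d * s : Aˣ) : A) * (1 + (v : A)) - 1)
          = ((s⁻¹ * d * s : Aˣ) : A) * (1 + (v : A)) := by abel
      rw [hn2, Units.val_mul, Units.val_mul]
      simp only [mul_sub, sub_mul, mul_add, add_mul, mul_one, one_mul, mul_assoc,
        Units.mul_inv_cancel_left, Units.inv_mul_cancel_left, Units.inv_mul, Units.mul_inv]
      abel
    have hz0 : lam ⟨(1 - ((Pproj J S hS
          ((((d⁻¹ * s)⁻¹ : Aˣ) : A) * (g : A) * ((d⁻¹ * s : Aˣ) : A)) : A))) *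
        ((((s⁻¹ * d * s : Aˣ) : A) - 1) * (1 + (v : A))), hzmem⟩ = 0 := by
      rw [hlam _ hzmem]
      have h2 : e * (1 - ((Pproj J S hS
          ((((d⁻¹ * s)⁻¹ : Aˣ) : A) * (g : A) * ((d⁻¹ * s : Aˣ) : A)) : A))) = 0 := by
        rw [mul_sub, mul_one, hcond.2.2, sub_self]
      have h1 : e * ((1 - ((Pproj J S hS
          ((((d⁻¹ * s)⁻¹ : Aˣ) : A) * (g : A) * ((d⁻¹ * s : Aˣ) : A)) : A))) *
          ((((s⁻¹ * d * s : Aˣ) : A) - 1) * (1 + (v : A)))) * e = 0 := by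
        rw [← mul_assoc, ← mul_assoc, h2, zero_mul, zero_mul, zero_mul]
      have h3 : (⟨e * ((1 - ((Pproj J S hS
          ((((d⁻¹ * s)⁻¹ : Aˣ) : A) * (g : A) * ((d⁻¹ * s : Aˣ) : A)) : A))) *
          ((((s⁻¹ * d * s : Aˣ) : A) - 1) * (1 + (v : A)))) * e,
          hJr _ (J.mul_mem_left e hzmem) e⟩ : ↥(Submodule.restrictScalars F J)) = 0 :=
        Subtype.ext h1
      rw [h3, map_zero]
    refine Eq.symm ?_
    calc lam ⟨((Qproj J S hS ((((d⁻¹ * s)⁻¹ : Aˣ) : A) * (g : A) * ((d⁻¹ * s : Aˣ) : A)) : A)) *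
            (1 + (((s⁻¹ * d * s : Aˣ) : A) * (1 + (v : A)) - 1)),
            hJr _ (Qproj J S hS ((((d⁻¹ * s)⁻¹ : Aˣ) : A) * (g : A) *
              ((d⁻¹ * s : Aˣ) : A))).2 _⟩
        = lam (⟨((Qproj J S hS (((s⁻¹ : Aˣ) : A) * (1 + (d : A) * ((g : A) - 1)) * (s : A)) : A)) *
              (1 + (v : A)),
              hJr _ (Qproj J S hS (((s⁻¹ : Aˣ) : A) * (1 + (d : A) * ((g : A) - 1)) *
                (s : A))).2 _⟩ +
            ⟨(1 - ((Pproj J S hS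
                ((((d⁻¹ * s)⁻¹ : Aˣ) : A) * (g : A) * ((d⁻¹ * s : Aˣ) : A)) : A))) *
              ((((s⁻¹ * d * s : Aˣ) : A) - 1) * (1 + (v : A))), hzmem⟩) :=
          congrArg lam (Subtype.ext hbig)
      _ = _ + _ := map_add lam _ _
      _ = lam ⟨((Qproj J S hS (((s⁻¹ : Aˣ) : A) * (1 + (d : A) * ((g : A) - 1)) * (s : A)) : A)) *
              (1 + (v : A)),
              hJr _ (Qproj J S hS (((s⁻¹ : Aˣ) : A) * (1 + (d : A) * ((g : A) - 1)) *
                (s : A))).2 _⟩ := by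
          rw [hz0, add_zero]
  · rw [if_neg hcond, if_neg hcond]

set_option maxHeartbeats 2000000 in
include hJr in
theorem claim3_aux [Fintype Aˣ] [Fintype ↥(Submodule.restrictScalars F J)]
    (hlam : ∀ x (hx : x ∈ J), lam ⟨x, hx⟩ = lam ⟨e * x * e, hJr _ (J.mul_mem_left e hx) e⟩)
    (θ : A → ℂ) (ε : F → ℂ)
    (g d : Aˣ) (hd : (d : A) - 1 ∈ J) :
    ∑ s : Aˣ, ∑ v : ↥(Submodule.restrictScalars F J),
        Phi J S hJr hS e θ ε lam (((s⁻¹ : Aˣ) : A) * (1 + (d : A) * ((g : A) - 1)) * (s : A)) v =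
    ∑ s : Aˣ, ∑ v : ↥(Submodule.restrictScalars F J),
        Phi J S hJr hS e θ ε lam (((s⁻¹ : Aˣ) : A) * (g : A) * (s : A)) v := by
  have hd' : ((d⁻¹ : Aˣ) : A) - 1 ∈ J := by
    have h : ((d⁻¹ : Aˣ) : A) - 1 = -(((d⁻¹ : Aˣ) : A) * ((d : A) - 1)) := by
      rw [mul_sub, mul_one, Units.inv_mul]; abel
    rw [h]; exact neg_mem (J.mul_mem_left _ hd)
  have hcomp : ∀ (c₂ c₁ : Aˣ) (w : ↥(Submodule.restrictScalars F J)), c₂ * c₁ = 1 →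
      (c₂ : A) * (1 + ((c₁ : A) * (1 + (w : A)) - 1)) - 1 = (w : A) := by
    intro c₂ c₁ w h
    have h1 : (1:A) + ((c₁:A) * (1 + (w : A)) - 1) = (c₁:A) * (1 + (w : A)) := by abel
    rw [h1, ← mul_assoc, ← Units.val_mul, h, Units.val_one, one_mul]
    abel
  let E : Aˣ × ↥(Submodule.restrictScalars F J) ≃ Aˣ × ↥(Submodule.restrictScalars F J) :=
  { toFun := fun p => (d⁻¹ * p.1,
      ⟨((p.1⁻¹ * d * p.1 : Aˣ) : A) * (1 + (p.2 : A)) - 1,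
        hmemJ_aux J hJr _ (hdconj_aux J hJr d hd p.1) p.2⟩),
    invFun := fun p => (d * p.1,
      ⟨((p.1⁻¹ * d⁻¹ * p.1 : Aˣ) : A) * (1 + (p.2 : A)) - 1,
        hmemJ_aux J hJr _ (hdconj_aux J hJr d⁻¹ hd' p.1) p.2⟩),
    left_inv := by
      rintro ⟨s, v⟩
      refine Prod.ext ?_ (Subtype.ext ?_)
      · show d * (d⁻¹ * s) = s
        group
      · show ((((d⁻¹ * s)⁻¹ * d⁻¹ * (d⁻¹ * s) : Aˣ) : A)) *
          (1 + (((s⁻¹ * d * s : Aˣ) : A) * (1 + (v : A)) - 1)) - 1 = (v : A)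
        refine hcomp _ _ v ?_
        group,
    right_inv := by
      rintro ⟨s, v⟩
      refine Prod.ext ?_ (Subtype.ext ?_)
      · show d⁻¹ * (d * s) = s
        group
      · show ((((d * s)⁻¹ * d * (d * s) : Aˣ) : A)) *
          (1 + (((s⁻¹ * d⁻¹ * s : Aˣ) : A) * (1 + (v : A)) - 1)) - 1 = (v : A)
        refine hcomp _ _ v ?_
        group }
  have e1 : (∑ s : Aˣ, ∑ v : ↥(Submodule.restrictScalars F J),
      Phi J S hJr hS e θ ε lam (((s⁻¹ : Aˣ) : A) * (1 + (d : A) * ((g : A) - 1)) * (s : A)) v) =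
      ∑ p : Aˣ × ↥(Submodule.restrictScalars F J),
        Phi J S hJr hS e θ ε lam
          (((p.1⁻¹ : Aˣ) : A) * (1 + (d : A) * ((g : A) - 1)) * (p.1 : A)) p.2 :=
    (Fintype.sum_prod_type (fun p : Aˣ × ↥(Submodule.restrictScalars F J) =>
      Phi J S hJr hS e θ ε lam
        (((p.1⁻¹ : Aˣ) : A) * (1 + (d : A) * ((g : A) - 1)) * (p.1 : A)) p.2)).symm
  have e2 : (∑ s : Aˣ, ∑ v : ↥(Submodule.restrictScalars F J),
      Phi J S hJr hS e θ ε lam (((s⁻¹ : Aˣ) : A) * (g : A) * (s : A)) v) =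
      ∑ p : Aˣ × ↥(Submodule.restrictScalars F J),
        Phi J S hJr hS e θ ε lam (((p.1⁻¹ : Aˣ) : A) * (g : A) * (p.1 : A)) p.2 :=
    (Fintype.sum_prod_type (fun p : Aˣ × ↥(Submodule.restrictScalars F J) =>
      Phi J S hJr hS e θ ε lam (((p.1⁻¹ : Aˣ) : A) * (g : A) * (p.1 : A)) p.2)).symm
  rw [e1, e2]
  refine Fintype.sum_equiv E _ _ ?_
  rintro ⟨s, v⟩
  exact claim3_term J S hJr hS e lam hlam θ ε g d s hd v

include hJr in
theorem auxMain [Fintype F] [FiniteDimensional F A]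
    (hlam : ∀ x (hx : x ∈ J), lam ⟨x, hx⟩ = lam ⟨e * x * e, hJr _ (J.mul_mem_left e hx) e⟩)
    (θ : A → ℂ) (ε : F → ℂ) (hεadd : ∀ a b : F, ε (a + b) = ε a * ε b) (hε0 : ε 0 = 1)
    (hεnt : ∃ a : F, ε a ≠ 1)
    (g d : Aˣ) (hd : (d : A) - 1 ∈ J) :
    chiFun J hJr S hS e θ ε lam (1 + (d : A) * ((g : A) - 1)) =
      chiFun J hJr S hS e θ ε lam (g : A) := by
  have hfinA : Finite A := Module.finite_of_finite F
  letI : Fintype Aˣ := Fintype.ofFinite _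
  letI : Fintype ↥(Submodule.restrictScalars F J) := Fintype.ofFinite _
  unfold chiFun
  congr 1
  have hcard : ((Fintype.card ↥(Submodule.restrictScalars F J) : ℂ)) ≠ 0 :=
    Nat.cast_ne_zero.mpr Fintype.card_ne_zero
  apply mul_right_cancel₀ hcard
  rw [claim2_aux J S hJr hS e lam θ ε hεadd hε0 hεnt _,
      claim2_aux J S hJr hS e lam θ ε hεadd hε0 hεnt _]
  exact claim3_aux J S hJr hS e lam hlam θ ε g d hd

end Main

theorem auxConj {F A : Type*} [Field F] [Ring A] [Algebra F A]
    (J : Ideal A) (hJr : ∀ x ∈ J, ∀ a : A, x * a ∈ J) (S : Subalgebra F A)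
    (hS : IsCompl (Subalgebra.toSubmodule S) (Submodule.restrictScalars F J))
    (e : A) (θ : A → ℂ) (ε : F → ℂ)
    (lam : (Submodule.restrictScalars F J) →ₗ[F] F) (u : Aˣ) (X : A) :
    chiFun J hJr S hS e θ ε lam ((u : A) * X * ((u⁻¹ : Aˣ) : A)) =
      chiFun J hJr S hS e θ ε lam X := by
  unfold chiFun
  congr 1
  have hkey : ∀ s : Aˣ, (((u * s)⁻¹ : Aˣ) : A) * ((u : A) * X * ((u⁻¹ : Aˣ) : A)) * ((u * s : Aˣ) : A)
      = ((s⁻¹ : Aˣ) : A) * X * (s : A) := by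
    intro s
    simp [mul_assoc, Units.inv_mul_cancel_left, Units.mul_inv_cancel_left]
  symm
  refine finsum_mem_eq_of_bijOn (fun s => u * s) ⟨?_, ?_, ?_⟩ ?_
  · intro s hs
    simp only [Set.mem_setOf_eq] at hs ⊢
    rw [hkey s]; exact hs
  · intro s _ s' _ hss'
    exact mul_left_cancel hss'
  · intro σ hσ
    refine ⟨u⁻¹ * σ, ?_, by simp⟩
    simp only [Set.mem_setOf_eq] at hσ ⊢
    have := hkey (u⁻¹ * σ)
    rw [mul_inv_cancel_left] at this
    rw [← this]; exact hσ
  · intro s _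
    rw [hkey s]

theorem auxIsUnit {A : Type*} [Monoid A] [Finite A] {z a : A} (h : z * a = 1) : IsUnit a := by
  have hinj : Function.Injective (fun x : A => a * x) := by
    intro x y hxy
    have := congrArg (z * ·) hxy
    simpa [← mul_assoc, h] using this
  obtain ⟨w, hw⟩ := (Finite.injective_iff_surjective.mp hinj) 1
  have hw' : a * w = 1 := hw
  refine ⟨⟨a, w, hw', ?_⟩, rfl⟩
  have hz : z = w := by
    calc z = z * (a * w) := by rw [hw', mul_one]
    _ = (z * a) * w := by rw [mul_assoc]
    _ = w := by rw [h, one_mul]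
  rw [← hz, h]

theorem auxUnitOfJ {A : Type*} [Ring A] [Finite A] {a : A}
    (ha : a - 1 ∈ (⊥ : Ideal A).jacobson) : IsUnit a := by
  by_cases hspan : Ideal.span {a} = ⊤
  · have h1 : (1 : A) ∈ Ideal.span {a} := by rw [hspan]; trivial
    obtain ⟨z, hz⟩ := Submodule.mem_span_singleton.mp h1
    exact auxIsUnit (by simpa using hz)
  · exfalso
    obtain ⟨M, hM, hle⟩ := Ideal.exists_le_maximal _ hspan
    have haM : a ∈ M := hle (Ideal.subset_span rfl)
    have haM1 : a - 1 ∈ M := by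
      have h2 : (⊥ : Ideal A).jacobson ≤ M := sInf_le ⟨bot_le, hM⟩
      exact h2 ha
    have h3 : (1 : A) ∈ M := by
      have := M.sub_mem haM haM1
      simpa using this
    exact hM.ne_top ((Ideal.eq_top_iff_one M).mpr h3)


/-- Proposition 4.1: the supercharacter `χ_{θ,λ}` is constant on superclasses:
`χ_{θ,λ}(1 + t·a·(g-1)·b·t⁻¹) = χ_{θ,λ}(g)` for all `g ∈ G`, `t ∈ H`, `a, b ∈ N`. -/
theorem chi_constant_on_superclasses
    {F A : Type*} [Field F] [Fintype F] [Ring A] [Algebra F A] [FiniteDimensional F A]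
    (J : Ideal A) (hJ : J = (⊥ : Ideal A).jacobson)
    (hJr : ∀ x ∈ J, ∀ a : A, x * a ∈ J)
    (hred : ∀ a b : A, a * b - b * a ∈ J)
    (S : Subalgebra F A)
    (hS : IsCompl (Subalgebra.toSubmodule S) (Submodule.restrictScalars F J))
    (e : A) (he : IsIdempotentElem e) (heS : e ∈ S)
    (lam : (Submodule.restrictScalars F J) →ₗ[F] F)
    (hlam : ∀ x (hx : x ∈ J), lam ⟨x, hx⟩ = lam ⟨e * x * e, hJr _ (J.mul_mem_left e hx) e⟩)
    (hreg : ¬ ∃ f : A, IsIdempotentElem f ∧ e * f * e = f ∧ f ≠ e ∧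
      ∀ x (hx : x ∈ J), lam ⟨x, hx⟩ = lam ⟨f * x * f, hJr _ (J.mul_mem_left f hx) f⟩)
    (θ : A → ℂ)
    (hθmul : ∀ h h' : A, MemHePrime S e h → MemHePrime S e h' → θ (h * h') = θ h * θ h')
    (hθne : ∀ h : A, MemHePrime S e h → θ h ≠ 0)
    (ε : F → ℂ) (hεadd : ∀ a b : F, ε (a + b) = ε a * ε b) (hε0 : ε 0 = 1)
    (hεnt : ∃ a : F, ε a ≠ 1) :
    ∀ g : Aˣ, ∀ t : Aˣ, (t : A) ∈ S → ((t⁻¹ : Aˣ) : A) ∈ S →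
      ∀ a b : A, a - 1 ∈ J → b - 1 ∈ J →
        chiFun J hJr S hS e θ ε lam
            (1 + (t : A) * a * ((g : A) - 1) * b * ((t⁻¹ : Aˣ) : A)) =
          chiFun J hJr S hS e θ ε lam (g : A) := by
  intro g t _ _ a b ha hb
  have hfinA : Finite A := Module.finite_of_finite F
  obtain ⟨au, hau⟩ := auxUnitOfJ (hJ ▸ ha)
  obtain ⟨bu, hbu⟩ := auxUnitOfJ (hJ ▸ hb)
  have hd : ((bu * au : Aˣ) : A) - 1 ∈ J := by
    have h1 : ((bu * au : Aˣ) : A) - 1 = b * (a - 1) + (b - 1) := by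
      rw [Units.val_mul, hau, hbu]; noncomm_ring
    rw [h1]; exact J.add_mem (J.mul_mem_left _ ha) hb
  have hEl : 1 + (t : A) * a * ((g : A) - 1) * b * ((t⁻¹ : Aˣ) : A)
      = (((bu * t⁻¹)⁻¹ : Aˣ) : A) * (1 + ((bu * au : Aˣ) : A) * ((g : A) - 1)) *
        ((((bu * t⁻¹)⁻¹ : Aˣ)⁻¹ : Aˣ) : A) := by
    rw [← hau, ← hbu]
    simp only [inv_inv, mul_inv_rev, inv_inv, Units.val_mul, mul_add, add_mul, mul_one,
      one_mul, mul_assoc, Units.mul_inv_cancel_left, Units.inv_mul_cancel_left,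
      Units.mul_inv, Units.inv_mul]
  rw [hEl, auxConj, auxMain J S hJr hS e lam hlam θ ε hεadd hε0 hεnt g (bu * au) hd]
end

section
/- Let e ∈ S be an idempotent and let λ, λ' ∈ J_e^* both be regular in J_e^*. If λ and λ' lie in the same G̃_e-orbit, then for every group homomorphism θ : H_{e'} → ℂ^× the induced characters coincide: χ_{θ,λ}(g) = χ_{θ,λ'}(g) for all g ∈ G. -/
/-- `λ, μ ∈ J_e^*` lie in the same `G̃_e`-orbit: `μ x = λ (t * a * x * b * s)` for all
`x ∈ J`, where `t ∈ (eSe)ˣ` with inverse `s` (taken in `eAe`, so `t*s = s*t = e`) and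
`a, b ∈ e + eJe`. -/
def SameOrbitJeStar {F A : Type*} [Field F] [Ring A] [Algebra F A]
    (J : Ideal A) (hJr : ∀ x ∈ J, ∀ a : A, x * a ∈ J) (S : Subalgebra F A) (e : A)
    (lam mu : (Submodule.restrictScalars F J) →ₗ[F] F) : Prop :=
  ∃ t s : A, t ∈ S ∧ s ∈ S ∧ e * t = t ∧ t * e = t ∧ e * s = s ∧ s * e = s ∧
    t * s = e ∧ s * t = e ∧
    ∃ a b : A, a - e ∈ J ∧ e * a = a ∧ a * e = a ∧ b - e ∈ J ∧ e * b = b ∧ b * e = b ∧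
      ∀ x (hx : x ∈ J), mu ⟨x, hx⟩ =
        lam ⟨t * a * x * b * s, hJr _ (hJr _ (J.mul_mem_left (t * a) hx) b) s⟩



section AuxLemmas

variable {F A : Type*} [Field F] [Ring A] [Algebra F A]

theorem lapp_congr (J : Ideal A) (lam : (Submodule.restrictScalars F J) →ₗ[F] F)
    {x y : A} (hx : x ∈ J) (hy : y ∈ J) (h : x = y) :
    lam ⟨x, hx⟩ = lam ⟨y, hy⟩ := by subst h; rfl

theorem lapp_add_sub (J : Ideal A) (lam : (Submodule.restrictScalars F J) →ₗ[F] F)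
    {p q r : A} (hp : p ∈ J) (hq : q ∈ J) (hr : r ∈ J) :
    lam ⟨p + q - r, sub_mem (add_mem hp hq) hr⟩
      = lam ⟨p, hp⟩ + lam ⟨q, hq⟩ - lam ⟨r, hr⟩ := by
  have h1 : (⟨p + q - r, sub_mem (add_mem hp hq) hr⟩ : Submodule.restrictScalars F J)
      = (⟨p, hp⟩ + ⟨q, hq⟩ - ⟨r, hr⟩ : Submodule.restrictScalars F J) := rfl
  rw [h1, map_sub, map_add]

theorem lapp_add (J : Ideal A) (lam : (Submodule.restrictScalars F J) →ₗ[F] F)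
    {p q : A} (hp : p ∈ J) (hq : q ∈ J) :
    lam ⟨p + q, add_mem hp hq⟩ = lam ⟨p, hp⟩ + lam ⟨q, hq⟩ := by
  have h1 : (⟨p + q, add_mem hp hq⟩ : Submodule.restrictScalars F J)
      = (⟨p, hp⟩ + ⟨q, hq⟩ : Submodule.restrictScalars F J) := rfl
  rw [h1, map_add]

theorem isUnit_one_add_of_jacobson {A : Type*} [Ring A] (J : Ideal A)
    (hJ : J = (⊥ : Ideal A).jacobson) : ∀ x ∈ J, IsUnit (1 + x) := by
  have key : ∀ x ∈ J, ∃ z : A, z * (1 + x) = 1 := by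
    intro x hx
    rw [hJ] at hx
    obtain ⟨z, hz⟩ := Ideal.mem_jacobson_iff.mp hx 1
    rw [Ideal.mem_bot] at hz
    refine ⟨z, ?_⟩
    have h2 : z * 1 * x + z - 1 = z * (1 + x) - 1 := by noncomm_ring
    rw [h2] at hz
    exact sub_eq_zero.mp hz
  intro x hx
  obtain ⟨z, hz⟩ := key x hx
  have hzm : -(z * x) ∈ J := neg_mem (J.mul_mem_left z hx)
  obtain ⟨v, hv⟩ := key _ hzm
  have hz' : z + z * x = 1 := by rw [← hz]; noncomm_ring
  have hz1 : 1 + -(z * x) = z := by rw [← hz']; abel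
  rw [hz1] at hv
  have hvx : v = 1 + x := by
    calc v = v * (z * (1 + x)) := by rw [hz, mul_one]
      _ = (v * z) * (1 + x) := (mul_assoc _ _ _).symm
      _ = 1 + x := by rw [hv, one_mul]
  exact ⟨⟨1 + x, z, by rw [← hvx]; exact hv, hz⟩, rfl⟩

theorem exists_inv_idem {A : Type*} [Ring A] (J : Ideal A)
    (hunit : ∀ x ∈ J, IsUnit (1 + x)) (e : A) (he : e * e = e)
    (a : A) (haJ : a - e ∈ J) (hea : e * a = a) (hae : a * e = a) :
    ∃ a' : A, a * a' = e ∧ a' * a = e ∧ e * a' = a' ∧ a' * e = a' := by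
  have h1 : e * (a - e) = a - e := by rw [mul_sub, hea, he]
  have h2 : (a - e) * e = a - e := by rw [sub_mul, hae, he]
  have hu : IsUnit (1 + (a - e)) := hunit _ haJ
  have hUval : (hu.unit : A) = 1 + (a - e) := hu.unit_spec
  set k : A := ((hu.unit⁻¹ : Aˣ) : A) with hk
  have hcomm : Commute e ((hu.unit : A)) := by
    rw [hUval]
    show e * (1 + (a - e)) = (1 + (a - e)) * e
    rw [mul_add, add_mul, mul_one, one_mul, h1, h2]
  have hcommk : e * k = k * e := (hcomm.units_inv_right).eq
  have hk1 : (1 + (a - e)) * k = 1 := by rw [← hUval, hk]; exact hu.unit.mul_inv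
  have hk2 : k * (1 + (a - e)) = 1 := by rw [← hUval, hk]; exact hu.unit.inv_mul
  have he1 : (e - 1) * (1 + (a - e)) = e - 1 := by
    have hx1 : (e - 1) * (1 + (a - e)) = (e - 1) + (e * (a - e) - (a - e)) := by noncomm_ring
    rw [hx1, h1]; abel
  have hek : (e - 1) * k = e - 1 := by
    calc (e - 1) * k = ((e - 1) * (1 + (a - e))) * k := by rw [he1]
      _ = (e - 1) * ((1 + (a - e)) * k) := mul_assoc _ _ _
      _ = e - 1 := by rw [hk1, mul_one]
  have he2 : (1 + (a - e)) * (e - 1) = e - 1 := by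
    have hx2 : (1 + (a - e)) * (e - 1) = (e - 1) + ((a - e) * e - (a - e)) := by noncomm_ring
    rw [hx2, h2]; abel
  have hke : k * (e - 1) = e - 1 := by
    calc k * (e - 1) = k * ((1 + (a - e)) * (e - 1)) := by rw [he2]
      _ = (k * (1 + (a - e))) * (e - 1) := (mul_assoc _ _ _).symm
      _ = e - 1 := by rw [hk2, one_mul]
  have hsplit : (1 + (a - e)) + (e - 1) = a := by abel
  refine ⟨e * k, ?_, ?_, ?_, ?_⟩
  · calc a * (e * k) = (a * e) * k := (mul_assoc _ _ _).symm
      _ = a * k := by rw [hae]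
      _ = ((1 + (a - e)) + (e - 1)) * k := by rw [hsplit]
      _ = (1 + (a - e)) * k + (e - 1) * k := add_mul _ _ _
      _ = 1 + (e - 1) := by rw [hk1, hek]
      _ = e := by abel
  · calc (e * k) * a = e * (k * a) := mul_assoc _ _ _
      _ = e * (k * ((1 + (a - e)) + (e - 1))) := by rw [hsplit]
      _ = e * (k * (1 + (a - e)) + k * (e - 1)) := by rw [mul_add]
      _ = e * (1 + (e - 1)) := by rw [hk2, hke]
      _ = e * e := by rw [show (1 : A) + (e - 1) = e from by abel]
      _ = e := he
  · calc e * (e * k) = (e * e) * k := (mul_assoc _ _ _).symm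
      _ = e * k := by rw [he]
  · calc (e * k) * e = e * (k * e) := mul_assoc _ _ _
      _ = e * (e * k) := by rw [← hcommk]
      _ = (e * e) * k := (mul_assoc _ _ _).symm
      _ = e * k := by rw [he]

end AuxLemmas

section MidLemmas

variable {F A : Type*} [Field F] [Ring A] [Algebra F A]

theorem xiFun_decomp (J : Ideal A) (S : Subalgebra F A)
    (hS : IsCompl (Subalgebra.toSubmodule S) (Submodule.restrictScalars F J))
    (θ : A → ℂ) (ε : F → ℂ) (lam : (Submodule.restrictScalars F J) →ₗ[F] F)
    (h x : A) (hh : h ∈ S) (hx : x ∈ J) :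
    xiFun J S hS θ ε lam (h + x) = θ h * ε (lam ⟨x, hx⟩) := by
  have hh' : h ∈ Subalgebra.toSubmodule S := hh
  have hx' : x ∈ Submodule.restrictScalars F J := hx
  have hsum : h + x = ((⟨h, hh'⟩ : Subalgebra.toSubmodule S) : A)
      + ((⟨x, hx'⟩ : Submodule.restrictScalars F J) : A) := rfl
  have hsum' : h + x = ((⟨x, hx'⟩ : Submodule.restrictScalars F J) : A)
      + ((⟨h, hh'⟩ : Subalgebra.toSubmodule S) : A) := by rw [add_comm]
  have e1 : ((Submodule.linearProjOfIsCompl _ _ hS (h + x) : Subalgebra.toSubmodule S) : A) = h := by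
    rw [hsum, map_add, Submodule.linearProjOfIsCompl, Submodule.projectionOnto_apply_left hS,
      Submodule.projectionOnto_apply_right hS, add_zero]
  have e2 : (Submodule.linearProjOfIsCompl _ _ hS.symm (h + x)) = ⟨x, hx'⟩ := by
    rw [hsum', map_add, Submodule.linearProjOfIsCompl, Submodule.projectionOnto_apply_left hS.symm,
      Submodule.projectionOnto_apply_right hS.symm, add_zero]
  unfold xiFun
  rw [e1, e2]

theorem chi_rmul (J : Ideal A) (hJr : ∀ x ∈ J, ∀ a : A, x * a ∈ J)
    (S : Subalgebra F A)
    (hS : IsCompl (Subalgebra.toSubmodule S) (Submodule.restrictScalars F J))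
    (e : A) (he : e * e = e) (c : A) (hcJ : c - e ∈ J) (hcu : IsUnit (1 + (c - e)))
    (θ : A → ℂ) (ε : F → ℂ)
    (lam nu : (Submodule.restrictScalars F J) →ₗ[F] F)
    (hlam : ∀ x (hx : x ∈ J), lam ⟨x, hx⟩ = lam ⟨e * x * e, hJr _ (J.mul_mem_left e hx) e⟩)
    (hnu : ∀ x (hx : x ∈ J), nu ⟨x, hx⟩ = lam ⟨x * c, hJr _ hx c⟩)
    (g : A) :
    chiFun J hJr S hS e θ ε nu g = chiFun J hJr S hS e θ ε lam g := by
  -- lam (x * e) = lam x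
  have hle : ∀ x (hx : x ∈ J), lam ⟨x * e, hJr _ hx e⟩ = lam ⟨x, hx⟩ := by
    intro x hx
    rw [hlam (x * e) (hJr _ hx e), hlam x hx]
    exact lapp_congr J lam _ _ (by simp only [mul_assoc, he])
  -- equivalence of the two orthogonality conditions
  have hcond : ∀ x (hx : x ∈ J),
      (∀ u (_ : u ∈ J), nu ⟨x * u, hJr x hx u⟩ = 0) ↔
      (∀ u (_ : u ∈ J), lam ⟨x * u, hJr x hx u⟩ = 0) := by
    intro x hx
    constructor
    · intro H u hu
      set k : A := ((hcu.unit⁻¹ : Aˣ) : A) with hk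
      have hkc : k * (1 + (c - e)) = 1 := by
        rw [← hcu.unit_spec, hk]; exact hcu.unit.inv_mul
      have hvu : (u * k) * (1 + (c - e)) = u := by
        rw [mul_assoc, hkc, mul_one]
      have hv : u * k ∈ J := hJr u hu k
      have e1 : x * u = x * ((u * k) * c) + x * (u * k) - x * ((u * k) * e) := by
        have h2 : (u * k) * c + (u * k) - (u * k) * e = u := by
          calc (u * k) * c + (u * k) - (u * k) * e = (u * k) * (1 + (c - e)) := by noncomm_ring
            _ = u := hvu
        calc x * u = x * ((u * k) * c + (u * k) - (u * k) * e) := by rw [h2]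
          _ = _ := by rw [mul_sub, mul_add]
      have m1 : x * ((u * k) * c) ∈ J := hJr _ hx _
      have m2 : x * (u * k) ∈ J := hJr _ hx _
      have m3 : x * ((u * k) * e) ∈ J := hJr _ hx _
      have h1 : lam ⟨x * ((u * k) * c), m1⟩ = 0 := by
        have h0 := H (u * k) hv
        rw [hnu _ (hJr x hx (u * k))] at h0
        rw [lapp_congr J lam m1 (hJr _ (hJr x hx (u * k)) c) (mul_assoc x (u * k) c).symm]
        exact h0
      have h3 : lam ⟨x * ((u * k) * e), m3⟩ = lam ⟨x * (u * k), m2⟩ := by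
        rw [lapp_congr J lam m3 (hJr _ m2 e) (mul_assoc x (u * k) e).symm]
        exact hle _ m2
      calc lam ⟨x * u, hJr x hx u⟩
          = lam ⟨x * ((u * k) * c) + x * (u * k) - x * ((u * k) * e),
              sub_mem (add_mem m1 m2) m3⟩ := lapp_congr J lam _ _ e1
        _ = lam ⟨x * ((u * k) * c), m1⟩ + lam ⟨x * (u * k), m2⟩
              - lam ⟨x * ((u * k) * e), m3⟩ := lapp_add_sub J lam m1 m2 m3
        _ = 0 := by rw [h1, h3]; ring
    · intro H u hu
      rw [hnu _ (hJr x hx u)]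
      calc lam ⟨x * u * c, hJr _ (hJr x hx u) c⟩
          = lam ⟨x * (u * c), hJr x hx (u * c)⟩ := lapp_congr J lam _ _ (mul_assoc x u c)
        _ = 0 := H (u * c) (hJr u hu c)
  have hset : GlamSet J hJr S e nu = GlamSet J hJr S e lam := by
    ext z
    constructor
    · rintro ⟨h, x, hP, ⟨hxJ, hx0⟩, rfl⟩
      exact ⟨h, x, hP, ⟨hxJ, (hcond x hxJ).1 hx0⟩, rfl⟩
    · rintro ⟨h, x, hP, ⟨hxJ, hx0⟩, rfl⟩
      exact ⟨h, x, hP, ⟨hxJ, (hcond x hxJ).2 hx0⟩, rfl⟩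
  have hxi : ∀ z ∈ GlamSet J hJr S e lam,
      xiFun J S hS θ ε nu z = xiFun J S hS θ ε lam z := by
    rintro z ⟨h, x, hP, ⟨hxJ, hx0⟩, rfl⟩
    rw [xiFun_decomp J S hS θ ε nu h x hP.1.1 hxJ,
        xiFun_decomp J S hS θ ε lam h x hP.1.1 hxJ]
    have hval : nu ⟨x, hxJ⟩ = lam ⟨x, hxJ⟩ := by
      rw [hnu x hxJ]
      have m1 : x * (c - e) ∈ J := hJr _ hxJ _
      have m2 : x * e ∈ J := hJr _ hxJ _
      calc lam ⟨x * c, hJr x hxJ c⟩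
          = lam ⟨x * (c - e) + x * e, add_mem m1 m2⟩ :=
            lapp_congr J lam _ _ (by rw [← mul_add]; congr 1; abel)
        _ = lam ⟨x * (c - e), m1⟩ + lam ⟨x * e, m2⟩ := lapp_add J lam m1 m2
        _ = lam ⟨x * e, m2⟩ := by rw [hx0 (c - e) hcJ, zero_add]
        _ = lam ⟨x, hxJ⟩ := hle x hxJ
    rw [hval]
  unfold chiFun
  rw [hset]
  congr 1
  exact finsum_mem_congr rfl (fun σ hσ => hxi _ hσ)

end MidLemmas

section ConjLemma

variable {F A : Type*} [Field F] [Ring A] [Algebra F A]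

theorem chi_conj (J : Ideal A) (hJr : ∀ x ∈ J, ∀ a : A, x * a ∈ J)
    (S : Subalgebra F A)
    (hS : IsCompl (Subalgebra.toSubmodule S) (Submodule.restrictScalars F J))
    (e : A) (he : e * e = e) (θ : A → ℂ) (ε : F → ℂ)
    (nu mu : (Submodule.restrictScalars F J) →ₗ[F] F)
    (m m' : A) (hmm' : m * m' = e) (hm'm : m' * m = e)
    (hem : e * m = m) (hme : m * e = m) (hem' : e * m' = m') (hm'e : m' * e = m')
    (hnu : ∀ x (hx : x ∈ J), nu ⟨x, hx⟩ = nu ⟨e * x * e, hJr _ (J.mul_mem_left e hx) e⟩)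
    (hmu : ∀ x (hx : x ∈ J), mu ⟨x, hx⟩ = nu ⟨m * x * m', hJr _ (J.mul_mem_left m hx) m'⟩)
    (g : A) :
    chiFun J hJr S hS e θ ε mu g = chiFun J hJr S hS e θ ε nu g := by
  set n : A := m + (1 - e) with hn
  set n' : A := m' + (1 - e) with hn'
  have hnn' : n * n' = 1 := by
    rw [hn, hn']
    have h0 : (m + (1 - e)) * (m' + (1 - e)) =
        m * m' + (m - m * e) + (m' - e * m') + (1 - e - e + e * e) := by noncomm_ring
    rw [h0, hmm', hme, hem', he]; abel
  have hn'n : n' * n = 1 := by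
    rw [hn, hn']
    have h0 : (m' + (1 - e)) * (m + (1 - e)) =
        m' * m + (m' - m' * e) + (m - e * m) + (1 - e - e + e * e) := by noncomm_ring
    rw [h0, hm'm, hm'e, hem, he]; abel
  have hen : e * n = m := by
    rw [hn]
    have h0 : e * (m + (1 - e)) = e * m + (e - e * e) := by noncomm_ring
    rw [h0, hem, he]; abel
  have hne : n * e = m := by
    rw [hn]
    have h0 : (m + (1 - e)) * e = m * e + (e - e * e) := by noncomm_ring
    rw [h0, hme, he]; abel
  have hen' : e * n' = m' := by
    rw [hn']
    have h0 : e * (m' + (1 - e)) = e * m' + (e - e * e) := by noncomm_ring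
    rw [h0, hem', he]; abel
  have hn'e : n' * e = m' := by
    rw [hn']
    have h0 : (m' + (1 - e)) * e = m' * e + (e - e * e) := by noncomm_ring
    rw [h0, hm'e, he]; abel
  have hmn' : m * n' = e := by
    rw [hn']
    have h0 : m * (m' + (1 - e)) = m * m' + (m - m * e) := by noncomm_ring
    rw [h0, hmm', hme]; abel
  have hm'n : m' * n = e := by
    rw [hn]
    have h0 : m' * (m + (1 - e)) = m' * m + (m' - m' * e) := by noncomm_ring
    rw [h0, hm'm, hm'e]; abel
  -- commutation with H_{e'}
  have hnh : ∀ h : A, MemHePrime S e h → n * h * n' = h := by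
    intro h hP
    obtain ⟨_, hhe, heh⟩ := hP
    have hmh : m * h = m := by
      calc m * h = (m * e) * h := by rw [hme]
        _ = m * (e * h) := mul_assoc _ _ _
        _ = m * e := by rw [heh]
        _ = m := hme
    have hhm' : h * m' = m' := by
      calc h * m' = h * (e * m') := by rw [hem']
        _ = (h * e) * m' := (mul_assoc _ _ _).symm
        _ = e * m' := by rw [hhe]
        _ = m' := hem'
    have h1 : n * h = m + h - e := by
      rw [hn]
      have h0 : (m + (1 - e)) * h = m * h + (h - e * h) := by noncomm_ring
      rw [h0, hmh, heh]; abel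
    rw [h1, hn']
    have h0 : (m + h - e) * (m' + (1 - e)) =
        m * m' + (m - m * e) + (h * m' + (h - h * e)) - (e * m' + (e - e * e)) := by noncomm_ring
    rw [h0, hmm', hme, hhm', hhe, hem', he]; abel
  have hn'h : ∀ h : A, MemHePrime S e h → n' * h * n = h := by
    intro h hP
    obtain ⟨_, hhe, heh⟩ := hP
    have hm'h : m' * h = m' := by
      calc m' * h = (m' * e) * h := by rw [hm'e]
        _ = m' * (e * h) := mul_assoc _ _ _
        _ = m' * e := by rw [heh]
        _ = m' := hm'e
    have hhm : h * m = m := by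
      calc h * m = h * (e * m) := by rw [hem]
        _ = (h * e) * m := (mul_assoc _ _ _).symm
        _ = e * m := by rw [hhe]
        _ = m := hem
    have h1 : n' * h = m' + h - e := by
      rw [hn']
      have h0 : (m' + (1 - e)) * h = m' * h + (h - e * h) := by noncomm_ring
      rw [h0, hm'h, heh]; abel
    rw [h1, hn]
    have h0 : (m' + h - e) * (m + (1 - e)) =
        m' * m + (m' - m' * e) + (h * m + (h - h * e)) - (e * m + (e - e * e)) := by noncomm_ring
    rw [h0, hm'm, hm'e, hhm, hhe, hem, he]; abel
  have cancel1 : ∀ z : A, n' * (n * z * n') * n = z := by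
    intro z
    simp only [← mul_assoc]
    rw [hn'n, one_mul, mul_assoc, hn'n, mul_one]
  have cancel2 : ∀ z : A, n * (n' * z * n) * n' = z := by
    intro z
    simp only [← mul_assoc]
    rw [hnn', one_mul, mul_assoc, hnn', mul_one]
  -- forward image
  have hmu_to : ∀ z ∈ GlamSet J hJr S e mu, n * z * n' ∈ GlamSet J hJr S e nu := by
    rintro z ⟨h, x, hP, ⟨hxJ, hx0⟩, rfl⟩
    have hxJ' : n * x * n' ∈ J := hJr _ (J.mul_mem_left n hxJ) n'
    refine ⟨h, n * x * n', hP, ⟨hxJ', ?_⟩, ?_⟩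
    · intro u hu
      have hu' : n' * u * e * m ∈ J := hJr _ (hJr _ (J.mul_mem_left n' hu) e) m
      have hkey : e * (n * x * n' * u) * e = m * (x * (n' * u * e * m)) * m' := by
        simp only [← mul_assoc]
        rw [hen, mul_assoc (m * x * n' * u * e) m m', hmm', mul_assoc (m * x * n' * u) e e, he]
      calc nu ⟨n * x * n' * u, hJr _ hxJ' u⟩
          = nu ⟨e * (n * x * n' * u) * e, _⟩ := hnu _ _
        _ = nu ⟨m * (x * (n' * u * e * m)) * m',
              hJr _ (J.mul_mem_left m (J.mul_mem_left x hu')) m'⟩ := lapp_congr J nu _ _ hkey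
        _ = mu ⟨x * (n' * u * e * m), J.mul_mem_left x hu'⟩ := (hmu _ _).symm
        _ = 0 := by
            rw [lapp_congr J mu (J.mul_mem_left x hu') (hJr x hxJ (n' * u * e * m)) rfl]
            exact hx0 _ hu'
    · rw [mul_add n h x, add_mul (n * h) (n * x) n', hnh h hP]
  have hnu_to : ∀ z ∈ GlamSet J hJr S e nu, n' * z * n ∈ GlamSet J hJr S e mu := by
    rintro z ⟨h, x, hP, ⟨hxJ, hx0⟩, rfl⟩
    have hxJ' : n' * x * n ∈ J := hJr _ (J.mul_mem_left n' hxJ) n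
    refine ⟨h, n' * x * n, hP, ⟨hxJ', ?_⟩, ?_⟩
    · intro u hu
      have hw : n * u * m' * e ∈ J := hJr _ (hJr _ (J.mul_mem_left n hu) m') e
      have hkey1 : m * (n' * x * n * u) * m' = e * x * n * u * m' := by
        simp only [← mul_assoc]
        rw [hmn']
      have hkey2 : e * (e * x * n * u * m') * e = e * (x * (n * u * m' * e)) * e := by
        simp only [← mul_assoc]
        rw [he, mul_assoc (e * x * n * u * m') e e, he]
      calc mu ⟨n' * x * n * u, hJr _ hxJ' u⟩
          = nu ⟨m * (n' * x * n * u) * m', _⟩ := hmu _ _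
        _ = nu ⟨e * x * n * u * m',
              hJr _ (J.mul_mem_left (e * x * n) hu) m'⟩ := lapp_congr J nu _ _ hkey1
        _ = nu ⟨e * (e * x * n * u * m') * e, _⟩ := hnu _ _
        _ = nu ⟨e * (x * (n * u * m' * e)) * e,
              hJr _ (J.mul_mem_left e (J.mul_mem_left x hw)) e⟩ := lapp_congr J nu _ _ hkey2
        _ = nu ⟨x * (n * u * m' * e), J.mul_mem_left x hw⟩ := (hnu _ _).symm
        _ = 0 := by
            rw [lapp_congr J nu (J.mul_mem_left x hw) (hJr x hxJ (n * u * m' * e)) rfl]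
            exact hx0 _ hw
    · rw [mul_add n' h x, add_mul (n' * h) (n' * x) n, hn'h h hP]
  -- xi equality
  have hxi : ∀ z ∈ GlamSet J hJr S e mu,
      xiFun J S hS θ ε mu z = xiFun J S hS θ ε nu (n * z * n') := by
    rintro z ⟨h, x, hP, ⟨hxJ, hx0⟩, rfl⟩
    have hxJ' : n * x * n' ∈ J := hJr _ (J.mul_mem_left n hxJ) n'
    have hdec : n * (h + x) * n' = h + n * x * n' := by
      rw [mul_add n h x, add_mul (n * h) (n * x) n', hnh h hP]
    rw [hdec, xiFun_decomp J S hS θ ε mu h x hP.1.1 hxJ,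
        xiFun_decomp J S hS θ ε nu h (n * x * n') hP.1.1 hxJ']
    have hval : mu ⟨x, hxJ⟩ = nu ⟨n * x * n', hxJ'⟩ := by
      rw [hmu x hxJ, hnu (n * x * n') hxJ']
      apply lapp_congr J nu
      simp only [← mul_assoc]
      rw [hen, mul_assoc (m * x) n' e, hn'e]
    rw [hval]
  -- bijection between the two G-lambda sets
  have hbij : Set.BijOn (fun z => n * z * n') (GlamSet J hJr S e mu) (GlamSet J hJr S e nu) := by
    refine ⟨fun z hz => hmu_to z hz, fun z₁ _ z₂ _ hEq => ?_,
      fun w hw => ⟨n' * w * n, hnu_to w hw, cancel2 w⟩⟩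
    have h2 := congrArg (fun y => n' * y * n) hEq
    simpa only [cancel1] using h2
  have hcard : Nat.card (GlamSet J hJr S e mu) = Nat.card (GlamSet J hJr S e nu) :=
    Nat.card_congr (Set.BijOn.equiv _ hbij)
  -- the unit
  set N : Aˣ := ⟨n, n', hnn', hn'n⟩ with hN
  have hNval : ((N : Aˣ) : A) = n := rfl
  have hNinv : ((N⁻¹ : Aˣ) : A) = n' := rfl
  have hconj1 : ∀ σ : Aˣ, (((σ * N⁻¹)⁻¹ : Aˣ) : A) * g * ((σ * N⁻¹ : Aˣ) : A)
      = n * (((σ⁻¹ : Aˣ) : A) * g * (σ : A)) * n' := by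
    intro σ
    rw [mul_inv_rev, inv_inv]
    simp only [Units.val_mul, hNval, hNinv]
    simp only [← mul_assoc]
  have hconj2 : ∀ τ : Aˣ, (((τ * N)⁻¹ : Aˣ) : A) * g * ((τ * N : Aˣ) : A)
      = n' * (((τ⁻¹ : Aˣ) : A) * g * (τ : A)) * n := by
    intro τ
    rw [mul_inv_rev]
    simp only [Units.val_mul, hNval, hNinv]
    simp only [← mul_assoc]
  have hsum : (∑ᶠ σ ∈ {σ : Aˣ | ((σ⁻¹ : Aˣ) : A) * g * (σ : A) ∈ GlamSet J hJr S e mu},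
        xiFun J S hS θ ε mu (((σ⁻¹ : Aˣ) : A) * g * (σ : A)))
      = ∑ᶠ τ ∈ {τ : Aˣ | ((τ⁻¹ : Aˣ) : A) * g * (τ : A) ∈ GlamSet J hJr S e nu},
        xiFun J S hS θ ε nu (((τ⁻¹ : Aˣ) : A) * g * (τ : A)) := by
    apply finsum_mem_eq_of_bijOn (fun σ : Aˣ => σ * N⁻¹)
    · refine ⟨?_, ?_, ?_⟩
      · intro σ hσ
        simp only [Set.mem_setOf_eq] at hσ ⊢
        rw [hconj1 σ]
        exact hmu_to _ hσ
      · intro σ₁ _ σ₂ _ hEq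
        exact mul_left_injective _ hEq
      · intro τ hτ
        simp only [Set.mem_setOf_eq] at hτ
        refine ⟨τ * N, ?_, by simp [mul_assoc]⟩
        simp only [Set.mem_setOf_eq]
        rw [hconj2 τ]
        exact hnu_to _ hτ
    · intro σ hσ
      simp only [Set.mem_setOf_eq] at hσ
      rw [hconj1 σ]
      exact hxi _ hσ
  unfold chiFun
  rw [hcard, hsum]

end ConjLemma

/-- Proposition 4.2: if the regular elements `λ, λ' ∈ J_e^*` lie in the same `G̃_e`-orbit,
then the induced supercharacters coincide: `χ_{θ,λ} = χ_{θ,λ'}`. -/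
theorem chi_eq_of_sameOrbitJeStar
    {F A : Type*} [Field F] [Fintype F] [Ring A] [Algebra F A] [FiniteDimensional F A]
    (J : Ideal A) (hJ : J = (⊥ : Ideal A).jacobson)
    (hJr : ∀ x ∈ J, ∀ a : A, x * a ∈ J)
    (hred : ∀ a b : A, a * b - b * a ∈ J)
    (S : Subalgebra F A)
    (hS : IsCompl (Subalgebra.toSubmodule S) (Submodule.restrictScalars F J))
    (e : A) (he : IsIdempotentElem e) (heS : e ∈ S)
    (lam lam' : (Submodule.restrictScalars F J) →ₗ[F] F)
    (hlam : ∀ x (hx : x ∈ J), lam ⟨x, hx⟩ = lam ⟨e * x * e, hJr _ (J.mul_mem_left e hx) e⟩)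
    (hlam' : ∀ x (hx : x ∈ J),
      lam' ⟨x, hx⟩ = lam' ⟨e * x * e, hJr _ (J.mul_mem_left e hx) e⟩)
    (hreg : ¬ ∃ f : A, IsIdempotentElem f ∧ e * f * e = f ∧ f ≠ e ∧
      ∀ x (hx : x ∈ J), lam ⟨x, hx⟩ = lam ⟨f * x * f, hJr _ (J.mul_mem_left f hx) f⟩)
    (hreg' : ¬ ∃ f : A, IsIdempotentElem f ∧ e * f * e = f ∧ f ≠ e ∧
      ∀ x (hx : x ∈ J), lam' ⟨x, hx⟩ = lam' ⟨f * x * f, hJr _ (J.mul_mem_left f hx) f⟩)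
    (horb : SameOrbitJeStar J hJr S e lam lam')
    (θ : A → ℂ)
    (hθmul : ∀ h h' : A, MemHePrime S e h → MemHePrime S e h' → θ (h * h') = θ h * θ h')
    (hθne : ∀ h : A, MemHePrime S e h → θ h ≠ 0)
    (ε : F → ℂ) (hεadd : ∀ a b : F, ε (a + b) = ε a * ε b) (hε0 : ε 0 = 1)
    (hεnt : ∃ a : F, ε a ≠ 1) :
    ∀ g : Aˣ, chiFun J hJr S hS e θ ε lam (g : A) =
      chiFun J hJr S hS e θ ε lam' (g : A) := by
  obtain ⟨t, s, htS, hsS, het, hte, hes, hse, hts, hst, a, b,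
    haJ, hea, hae, hbJ, heb, hbe, horbEq⟩ := horb
  intro g
  have hee : e * e = e := he
  have hunit : ∀ x ∈ J, IsUnit (1 + x) := isUnit_one_add_of_jacobson J hJ
  obtain ⟨a', ha1, ha2, ha3, ha4⟩ := exists_inv_idem J hunit e hee a haJ hea hae
  -- m = t*a, m' = a'*s
  have hmm' : (t * a) * (a' * s) = e := by
    calc (t * a) * (a' * s) = t * ((a * a') * s) := by simp only [mul_assoc]
      _ = t * (e * s) := by rw [ha1]
      _ = t * s := by rw [hes]
      _ = e := hts
  have hm'm : (a' * s) * (t * a) = e := by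
    calc (a' * s) * (t * a) = a' * ((s * t) * a) := by simp only [mul_assoc]
      _ = a' * (e * a) := by rw [hst]
      _ = a' * a := by rw [hea]
      _ = e := ha2
  have hem : e * (t * a) = t * a := by
    calc e * (t * a) = (e * t) * a := (mul_assoc _ _ _).symm
      _ = t * a := by rw [het]
  have hme : (t * a) * e = t * a := by
    calc (t * a) * e = t * (a * e) := mul_assoc _ _ _
      _ = t * a := by rw [hae]
  have hem' : e * (a' * s) = a' * s := by
    calc e * (a' * s) = (e * a') * s := (mul_assoc _ _ _).symm
      _ = a' * s := by rw [ha3]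
  have hm'e : (a' * s) * e = a' * s := by
    calc (a' * s) * e = a' * (s * e) := mul_assoc _ _ _
      _ = a' * s := by rw [hse]
  -- c = t*a*b*s
  have habJ : a * b - e ∈ J := by
    have hsplit : a * b - e = (a - e) * b + (e * b - e) := by noncomm_ring
    rw [hsplit, heb]
    exact add_mem (hJr _ haJ b) hbJ
  have hcJ : t * a * b * s - e ∈ J := by
    have hsplit : t * (a * b - e) * s = t * a * b * s - e := by
      calc t * (a * b - e) * s = (t * (a * b)) * s - (t * e) * s := by noncomm_ring
        _ = t * a * b * s - t * s := by rw [hte, ← mul_assoc t a b]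
        _ = t * a * b * s - e := by rw [hts]
    rw [← hsplit]
    exact hJr _ (J.mul_mem_left t habJ) s
  have hcu : IsUnit (1 + (t * a * b * s - e)) := hunit _ hcJ
  have hec : e * (t * a * b * s) = t * a * b * s := by
    simp only [← mul_assoc]
    rw [het]
  -- the right-translation linear map nu
  let rc : (Submodule.restrictScalars F J) →ₗ[F] (Submodule.restrictScalars F J) :=
    { toFun := fun x => ⟨(x : A) * (t * a * b * s), hJr _ x.2 (t * a * b * s)⟩
      map_add' := by
        intro x y
        apply Subtype.ext
        simp [add_mul]
      map_smul' := by
        intro f x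
        apply Subtype.ext
        simp [smul_mul_assoc] }
  let nu : (Submodule.restrictScalars F J) →ₗ[F] F := lam.comp rc
  have hnuApp : ∀ x (hx : x ∈ J),
      nu ⟨x, hx⟩ = lam ⟨x * (t * a * b * s), hJr _ hx (t * a * b * s)⟩ := fun _ _ => rfl
  -- nu lies in J_e^*
  have hnuJe : ∀ x (hx : x ∈ J),
      nu ⟨x, hx⟩ = nu ⟨e * x * e, hJr _ (J.mul_mem_left e hx) e⟩ := by
    intro x hx
    rw [hnuApp, hnuApp]
    rw [hlam (x * (t * a * b * s)) _, hlam ((e * x * e) * (t * a * b * s)) _]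
    apply lapp_congr
    simp only [← mul_assoc]
    rw [he, mul_assoc (e * x) e t, het]
  -- lam' is the conjugate of nu
  have hmuEq : ∀ x (hx : x ∈ J),
      lam' ⟨x, hx⟩ = nu ⟨(t * a) * x * (a' * s),
        hJr _ (J.mul_mem_left (t * a) hx) (a' * s)⟩ := by
    intro x hx
    rw [hnuApp, horbEq x hx]
    apply lapp_congr
    simp only [← mul_assoc]
    rw [mul_assoc (t * a * x * a') s t, hst, mul_assoc (t * a * x * a') e a, hea,
      mul_assoc (t * a * x) a' a, ha2, mul_assoc (t * a * x) e b, heb]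
  have step1 := chi_conj J hJr S hS e hee θ ε nu lam' (t * a) (a' * s)
    hmm' hm'm hem hme hem' hm'e hnuJe hmuEq (g : A)
  have step2 := chi_rmul J hJr S hS e hee (t * a * b * s) hcJ hcu θ ε lam nu hlam hnuApp (g : A)
  rw [← step2, step1]
end

section
/- Let e ∈ S be an idempotent, λ ∈ J_e^* regular in J_e^*, and let θ, θ' : H_{e'} → ℂ^× be group homomorphisms with θ ≠ θ'. Then the induced characters χ_{θ,λ} and χ_{θ',λ} are disjoint; in particular ⟨χ_{θ,λ}, χ_{θ',λ}⟩ = |G|⁻¹ · Σ_{g∈G} χ_{θ,λ}(g) · conj(χ_{θ',λ}(g)) = 0. -/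
lemma aux_conj_eq_inv {z : ℂ} {n : ℕ} (hn : n ≠ 0) (h : z ^ n = 1) :
    (starRingEnd ℂ) z = z⁻¹ := by
  have habs : ‖z‖ = 1 := by
    have h2 : ‖z‖ ^ n = 1 := by rw [← norm_pow, h, norm_one]
    rcases lt_trichotomy (‖z‖) 1 with h1 | h1 | h1
    · exact absurd h2 (ne_of_lt (pow_lt_one₀ (norm_nonneg z) h1 hn))
    · exact h1
    · exact absurd h2.symm (ne_of_lt (one_lt_pow₀ h1 hn))
  exact (Complex.inv_eq_conj habs).symm

lemma aux_eq_one_of_pow_eq_one {z : ℂ} {m p : ℕ}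
    (hcop : Nat.Coprime m p) (h1 : z ^ m = 1) (h2 : z ^ p = 1) : z = 1 := by
  have d1 : orderOf z ∣ m := orderOf_dvd_of_pow_eq_one h1
  have d2 : orderOf z ∣ p := orderOf_dvd_of_pow_eq_one h2
  have hd : orderOf z ∣ Nat.gcd m p := Nat.dvd_gcd d1 d2
  rw [hcop] at hd
  exact orderOf_eq_one_iff.mp (Nat.dvd_one.mp hd)

lemma aux_sum_hom_eq_zero {G : Type*} [Group G] [Fintype G] (c : G → Prop) [DecidablePred c]
    (φ : G → ℂ) (hmulc : ∀ u v, c u → c v → c (u * v))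
    (hmul : ∀ u v, c u → c v → φ (u * v) = φ u * φ v)
    (u₀ : G) (hc₀ : c u₀) (hφ₀ : φ u₀ ≠ 1) :
    ∑ u : G, (if c u then φ u else 0) = 0 := by
  have hpow : ∀ k : ℕ, c (u₀ ^ (k + 1)) := by
    intro k; induction k with
    | zero => rw [zero_add, pow_one]; exact hc₀
    | succ k ih => rw [pow_succ]; exact hmulc _ _ ih hc₀
  have hinv : c u₀⁻¹ := by
    by_cases h1 : orderOf u₀ = 1
    · rw [orderOf_eq_one_iff.mp h1]; rw [inv_one]
      rw [orderOf_eq_one_iff.mp h1] at hc₀; exact hc₀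
    · have hpos : 0 < orderOf u₀ := orderOf_pos u₀
      have hval : u₀ ^ (orderOf u₀ - 1) * u₀ = 1 := by
        rw [← pow_succ, Nat.sub_add_cancel hpos, pow_orderOf_eq_one]
      have he : u₀ ^ (orderOf u₀ - 1) = u₀⁻¹ := eq_inv_of_mul_eq_one_left hval
      rw [← he]
      have := hpow (orderOf u₀ - 2)
      rwa [show orderOf u₀ - 2 + 1 = orderOf u₀ - 1 by omega] at this
  have hre : ∑ u : G, (if c (u₀ * u) then φ (u₀ * u) else 0)
      = ∑ u : G, (if c u then φ u else 0) :=
    Fintype.sum_bijective (u₀ * ·) (Group.mulLeft_bijective u₀) _ _ (fun u => rfl)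
  have hre2 : ∑ u : G, (if c (u₀ * u) then φ (u₀ * u) else 0)
      = φ u₀ * ∑ u : G, (if c u then φ u else 0) := by
    rw [Finset.mul_sum]
    refine Finset.sum_congr rfl fun u _ => ?_
    by_cases hu : c u
    · rw [if_pos hu, if_pos (hmulc _ _ hc₀ hu), hmul _ _ hc₀ hu]
    · rw [if_neg hu, if_neg, mul_zero]
      intro hcon
      exact hu (by simpa using hmulc _ _ hinv hcon)
  have heq := hre.symm.trans hre2
  have h0 : (φ u₀ - 1) * ∑ u : G, (if c u then φ u else 0) = 0 := by
    rw [sub_mul, one_mul, ← heq, sub_self]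
  rcases mul_eq_zero.mp h0 with h | h
  · exact absurd (by linear_combination h) hφ₀
  · exact h

lemma aux_isUnit_one_add {B : Type*} [Ring B] [Finite B] {x : B}
    (hx : x ∈ (⊥ : Ideal B).jacobson) : IsUnit (1 + x) := by
  have hspan : Ideal.span {1 + x} = ⊤ := by
    by_contra hne
    obtain ⟨M, hM, hle⟩ := Ideal.exists_le_maximal _ hne
    have hxM : x ∈ M := by
      rw [Ideal.jacobson] at hx
      exact Submodule.mem_sInf.mp hx M ⟨bot_le, hM⟩
    have h1x : (1 + x) ∈ M := hle (Ideal.subset_span rfl)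
    have h1 : (1 : B) ∈ M := by simpa using M.sub_mem h1x hxM
    exact hM.ne_top ((Ideal.eq_top_iff_one M).mpr h1)
  have h1 : (1 : B) ∈ Ideal.span {1 + x} := by rw [hspan]; trivial
  obtain ⟨a, ha⟩ := Submodule.mem_span_singleton.mp h1
  rw [smul_eq_mul] at ha
  have hinj : Function.Injective (fun z : B => (1 + x) * z) := by
    intro z z' hzz
    have := congrArg (a * ·) hzz
    simpa [← mul_assoc, ha] using this
  obtain ⟨z, hz⟩ := (Finite.injective_iff_surjective.mp hinj) 1
  simp only at hz
  have hza : z = a := by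
    have : a * ((1 + x) * z) = a := by rw [hz, mul_one]
    rwa [← mul_assoc, ha, one_mul] at this
  exact ⟨⟨1 + x, z, hz, by rw [hza, ha]⟩, rfl⟩

lemma aux_mem_jac_of_nilpotent {B : Type*} [Ring B] {J : Ideal B}
    (hJ : J = (⊥ : Ideal B).jacobson) (hJr : ∀ x ∈ J, ∀ a : B, x * a ∈ J)
    (hred : ∀ a b : B, a * b - b * a ∈ J) {s : B} {N : ℕ} (hs : s ^ N = 0) :
    s ∈ J := by
  rw [hJ, Ideal.jacobson]
  refine Submodule.mem_sInf.mpr ?_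
  rintro M ⟨-, hM⟩
  by_contra hsM
  have hJM : J ≤ M := by
    rw [hJ, Ideal.jacobson]; exact sInf_le ⟨bot_le, hM⟩
  rcases N with - | N
  · refine absurd ((Ideal.eq_top_iff_one M).mpr ?_) hM.ne_top
    have h10 : (1 : B) = 0 := by rw [← pow_zero s, hs]
    rw [h10]; exact M.zero_mem
  have hsup : M ⊔ Ideal.span {s} = ⊤ := by
    rcases lt_or_eq_of_le (le_sup_left : M ≤ M ⊔ Ideal.span {s}) with hlt | heq
    · exact hM.1.2 _ hlt
    · exfalso; apply hsM
      have hss : s ∈ M ⊔ Ideal.span {s} :=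
        (le_sup_right : Ideal.span {s} ≤ M ⊔ Ideal.span {s}) (Ideal.subset_span rfl)
      rwa [← heq] at hss
  have h1 : (1 : B) ∈ M ⊔ Ideal.span {s} := by rw [hsup]; trivial
  rw [Submodule.mem_sup] at h1
  obtain ⟨m, hm, y, hy, hmy⟩ := h1
  obtain ⟨a, ha⟩ := Submodule.mem_span_singleton.mp hy
  rw [smul_eq_mul] at ha
  set z := a * s with hz
  have hcomm : ∀ k : ℕ, ∃ j ∈ J, z ^ (k + 1) = a ^ (k + 1) * s ^ (k + 1) + j := by
    intro k; induction k with
    | zero => exact ⟨0, J.zero_mem, by simp [hz]⟩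
    | succ k ih =>
      obtain ⟨j, hj, hrep⟩ := ih
      refine ⟨a ^ (k+1) * (s ^ (k+1) * a - a * s ^ (k+1)) * s + j * z, ?_, ?_⟩
      · refine Ideal.add_mem _ (hJr _ (J.mul_mem_left _ (hred (s ^ (k+1)) a)) s)
          (hJr _ hj z)
      · rw [pow_succ z, hrep, pow_succ a, pow_succ s, hz]
        generalize a ^ (k+1) = A1
        generalize s ^ (k+1) = S1
        noncomm_ring
  obtain ⟨j, hj, hrep⟩ := hcomm N
  have hzN : z ^ (N + 1) ∈ M := by
    rw [hrep, hs, mul_zero, zero_add]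
    exact hJM hj
  have h1z : 1 - z ∈ M := by
    have hmz : m = 1 - z := by rw [← hmy, ha]; abel
    rw [← hmz]; exact hm
  have hgeom : (∑ i ∈ Finset.range (N + 1), z ^ i) * (1 - z) = 1 - z ^ (N + 1) := by
    rw [← neg_sub z 1, mul_neg, geom_sum_mul, neg_sub]
  have h1M : (1 : B) ∈ M := by
    have hin : (∑ i ∈ Finset.range (N + 1), z ^ i) * (1 - z) + z ^ (N + 1) ∈ M :=
      M.add_mem (Ideal.mul_mem_left M _ h1z) hzN
    rwa [hgeom, sub_add_cancel] at hin
  exact hM.ne_top ((Ideal.eq_top_iff_one M).mpr h1M)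



lemma aux_jac_pow_eq_bot {F A : Type*} [Field F] [Ring A] [Algebra F A] [Finite A]
    (J : Ideal A) (hJ : J = (⊥ : Ideal A).jacobson)
    (hJr : ∀ x ∈ J, ∀ a : A, x * a ∈ J) :
    ∃ n, (Submodule.restrictScalars F J) ^ n = ⊥ := by
  classical
  set T : Submodule F A := Submodule.restrictScalars F J with hT
  have hstep : ∀ m : ℕ, T ^ (m + 2) ≤ T ^ (m + 1) := by
    intro m; induction m with
    | zero =>
      rw [show (2:ℕ) = 1+1 from rfl, pow_succ, pow_one]
      exact Submodule.mul_le.mpr (fun x hx y hy => J.mul_mem_left x hy)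
    | succ m ih =>
      rw [pow_succ (n := m+2), pow_succ (n := m+1)]
      exact mul_le_mul' ih le_rfl
  have hanti : ∀ a b : ℕ, a ≤ b → T ^ (b + 1) ≤ T ^ (a + 1) := by
    intro a b hab
    induction b, hab using Nat.le_induction with
    | base => exact le_rfl
    | succ b hab ih => exact (hstep b).trans ih
  haveI : Finite (Submodule F A) := Finite.of_injective _ SetLike.coe_injective
  obtain ⟨i, j, hij, hpow⟩ : ∃ i j : ℕ, i < j ∧ T ^ (i + 1) = T ^ (j + 1) := by
    obtain ⟨i, j, hne, heq⟩ := Finite.exists_ne_map_eq_of_infinite (fun n : ℕ => T ^ (n + 1))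
    rcases hne.lt_or_gt with h | h
    exacts [⟨i, j, h, heq⟩, ⟨j, i, h, heq.symm⟩]
  have hfix : T ^ (i + 1) = T * T ^ (i + 1) := by
    refine le_antisymm ?_ ?_
    · calc T ^ (i+1) = T ^ (j+1) := hpow
        _ ≤ T ^ (i+1+1) := hanti (i + 1) j hij
        _ = T * T ^ (i+1) := pow_succ' T (i+1)
    · calc T * T ^ (i+1) = T ^ (i+1+1) := (pow_succ' T (i+1)).symm
        _ ≤ T ^ (i+1) := hstep i
  refine ⟨i + 1, ?_⟩
  by_contra hbot
  letI : Fintype A := Fintype.ofFinite A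
  set Nn : Submodule F A := T ^ (i + 1) with hNn
  set Good : Set (Finset A) :=
    {s | (↑s : Set A) ⊆ (Nn : Set A) ∧ (Nn : Set A) ⊆ (Ideal.span (↑s : Set A) : Set A)}
    with hGood
  have hGood0 : (Set.toFinset (Nn : Set A)) ∈ Good := by
    constructor
    · rw [Set.coe_toFinset]
    · rw [Set.coe_toFinset]; exact fun x hx => Ideal.subset_span hx
  obtain ⟨s, hsGood, hsmin⟩ :=
    Set.exists_min_image Good Finset.card (Set.toFinite Good) ⟨_, hGood0⟩
  obtain ⟨hsub, hspan⟩ := hsGood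
  rcases Finset.eq_empty_or_nonempty s with rfl | ⟨a, has⟩
  · apply hbot
    refine (Submodule.eq_bot_iff _).mpr (fun x hx => ?_)
    have hx2 := hspan hx
    simp only [Finset.coe_empty, Ideal.span_empty] at hx2
    exact hx2
  · have haN : a ∈ Nn := hsub has
    have haTN : a ∈ T * Nn := by rw [← hfix]; exact haN
    set C : A → Prop := fun y => ∃ c : A → A, (∀ b, c b ∈ J) ∧ y = ∑ b ∈ s, c b * b with hC
    have hCadd : ∀ y z, C y → C z → C (y + z) := by
      rintro y z ⟨cy, hcy, rfl⟩ ⟨cz, hcz, rfl⟩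
      refine ⟨fun b => cy b + cz b, fun b => J.add_mem (hcy b) (hcz b), ?_⟩
      rw [← Finset.sum_add_distrib]
      exact Finset.sum_congr rfl (fun b _ => (add_mul _ _ _).symm)
    have hCspan : ∀ y, y ∈ Ideal.span (↑s : Set A) → ∀ x ∈ J, C (x * y) := by
      intro y hy
      induction hy using Submodule.span_induction with
      | mem b hb =>
        intro x hx
        refine ⟨fun b' => if b' = b then x else 0, fun b' => ?_, ?_⟩
        · show (if b' = b then x else 0) ∈ J
          by_cases hb' : b' = b
          · rw [if_pos hb']; exact hx
          · rw [if_neg hb']; exact J.zero_mem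
        · rw [show (∑ b' ∈ s, (if b' = b then x else 0) * b')
              = ∑ b' ∈ s, (if b' = b then x * b' else 0) from
            Finset.sum_congr rfl (fun b' _ => by split <;> simp)]
          rw [Finset.sum_ite_eq' s b (fun b' => x * b'), if_pos (Finset.mem_coe.mp hb)]
      | zero =>
        intro x hx
        refine ⟨0, fun b => J.zero_mem, ?_⟩
        simp
      | add y z hy hz ihy ihz =>
        intro x hx
        rw [mul_add]
        exact hCadd _ _ (ihy x hx) (ihz x hx)
      | smul r y hy ihy =>
        intro x hx
        rw [smul_eq_mul, ← mul_assoc]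
        exact ihy (x * r) (hJr x hx r)
    have hCa : C a :=
      Submodule.mul_induction_on haTN
        (fun x hx y hy => hCspan y (hspan hy) x hx) hCadd
    obtain ⟨c, hcJ, hrep⟩ := hCa
    have hsplit : c a * a + ∑ b ∈ s.erase a, c b * b = ∑ b ∈ s, c b * b :=
      Finset.add_sum_erase s (fun b => c b * b) has
    have hrepE : (1 - c a) * a = ∑ b ∈ s.erase a, c b * b := by
      have h5 : ∑ b ∈ s.erase a, c b * b = a - c a * a := by
        have h6 := hsplit
        rw [← hrep] at h6
        exact eq_sub_of_add_eq' h6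
      rw [sub_mul, one_mul, h5]
    have hu : IsUnit (1 - c a) := by
      have hneg : -(c a) ∈ (⊥ : Ideal A).jacobson := hJ ▸ J.neg_mem (hcJ a)
      have := aux_isUnit_one_add hneg
      rwa [← sub_eq_add_neg] at this
    have haspan : a ∈ Ideal.span (↑(s.erase a) : Set A) := by
      have h2 : ∑ b ∈ s.erase a, c b * b ∈ Ideal.span (↑(s.erase a) : Set A) :=
        Submodule.sum_mem _ (fun b hb =>
          Ideal.mul_mem_left _ _ (Ideal.subset_span (Finset.mem_coe.mpr hb)))
      rw [← hrepE] at h2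
      have h3 := Ideal.mul_mem_left _ (↑hu.unit⁻¹) h2
      have hcancel : (↑hu.unit⁻¹ : A) * (1 - c a) = 1 := hu.val_inv_mul
      rwa [← mul_assoc, hcancel, one_mul] at h3
    have hGood' : s.erase a ∈ Good := by
      constructor
      · exact (Finset.coe_subset.mpr (Finset.erase_subset a s)).trans hsub
      · intro x hx
        have hxs : x ∈ Ideal.span (↑s : Set A) := hspan hx
        have hle : Ideal.span (↑s : Set A) ≤ Ideal.span (↑(s.erase a) : Set A) := by
          rw [Ideal.span_le]
          intro b hb
          rcases eq_or_ne b a with rfl | hba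
          · exact haspan
          · exact Ideal.subset_span
              (Finset.mem_coe.mpr (Finset.mem_erase.mpr ⟨hba, Finset.mem_coe.mp hb⟩))
        exact hle hxs
    have hcard := hsmin _ hGood'
    have hlt := Finset.card_erase_lt_of_mem has
    omega



/-- Proposition 4.3: if `θ ≠ θ'` (as linear characters of `H_{e'}`), then the induced
supercharacters `χ_{θ,λ}` and `χ_{θ',λ}` are disjoint; in particular their inner product
`|G|⁻¹ · Σ_{g ∈ G} χ_{θ,λ}(g) · conj(χ_{θ',λ}(g))` vanishes. -/
theorem chi_disjoint_of_theta_ne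
    {F A : Type*} [Field F] [Fintype F] [Ring A] [Algebra F A] [FiniteDimensional F A]
    (J : Ideal A) (hJ : J = (⊥ : Ideal A).jacobson)
    (hJr : ∀ x ∈ J, ∀ a : A, x * a ∈ J)
    (hred : ∀ a b : A, a * b - b * a ∈ J)
    (S : Subalgebra F A)
    (hS : IsCompl (Subalgebra.toSubmodule S) (Submodule.restrictScalars F J))
    (e : A) (he : IsIdempotentElem e) (heS : e ∈ S)
    (lam : (Submodule.restrictScalars F J) →ₗ[F] F)
    (hlam : ∀ x (hx : x ∈ J), lam ⟨x, hx⟩ = lam ⟨e * x * e, hJr _ (J.mul_mem_left e hx) e⟩)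
    (hreg : ¬ ∃ f : A, IsIdempotentElem f ∧ e * f * e = f ∧ f ≠ e ∧
      ∀ x (hx : x ∈ J), lam ⟨x, hx⟩ = lam ⟨f * x * f, hJr _ (J.mul_mem_left f hx) f⟩)
    (θ θ' : A → ℂ)
    (hθmul : ∀ h h' : A, MemHePrime S e h → MemHePrime S e h' → θ (h * h') = θ h * θ h')
    (hθne : ∀ h : A, MemHePrime S e h → θ h ≠ 0)
    (hθ'mul : ∀ h h' : A, MemHePrime S e h → MemHePrime S e h' → θ' (h * h') = θ' h * θ' h')
    (hθ'ne : ∀ h : A, MemHePrime S e h → θ' h ≠ 0)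
    (hne : ∃ h : A, MemHePrime S e h ∧ θ h ≠ θ' h)
    (ε : F → ℂ) (hεadd : ∀ a b : F, ε (a + b) = ε a * ε b) (hε0 : ε 0 = 1)
    (hεnt : ∃ a : F, ε a ≠ 1) :
    (Nat.card Aˣ : ℂ)⁻¹ *
      ∑ᶠ g : Aˣ, chiFun J hJr S hS e θ ε lam (g : A) *
        (starRingEnd ℂ) (chiFun J hJr S hS e θ' ε lam (g : A)) = 0 := by
  classical
  rcases subsingleton_or_nontrivial A with hA | hA
  · obtain ⟨h, hmem, hne'⟩ := hne
    exfalso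
    apply hne'
    have h11 : h * h = h := Subsingleton.elim _ _
    have e1 : θ h = θ h * θ h := by rw [← hθmul h h hmem hmem, h11]
    have e2 : θ' h = θ' h * θ' h := by rw [← hθ'mul h h hmem hmem, h11]
    have t1 : θ h = 1 := (mul_left_cancel₀ (hθne h hmem) (by rw [mul_one, ← e1])).symm
    have t2 : θ' h = 1 := (mul_left_cancel₀ (hθ'ne h hmem) (by rw [mul_one, ← e2])).symm
    rw [t1, t2]
  haveI hFinA : Finite A := Module.finite_of_finite F
  letI : Fintype A := Fintype.ofFinite A
  letI : Fintype Aˣ := Fintype.ofFinite Aˣ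
  haveI := ringChar.charP F
  set p : ℕ := ringChar F with hpdef
  haveI hpP : Fact (Nat.Prime p) := ⟨CharP.char_is_prime F p⟩
  haveI : CharP A p := charP_of_injective_algebraMap (algebraMap F A).injective p
  have hpne : p ≠ 0 := hpP.out.ne_zero
  -- the linear functional L = lam ∘ (projection onto J)
  set L : A → F := fun a =>
    lam (Submodule.linearProjOfIsCompl (Submodule.restrictScalars F J)
      (Subalgebra.toSubmodule S) hS.symm a) with hLdef
  have hmemSm : ∀ {s : A}, s ∈ S → s ∈ Subalgebra.toSubmodule S :=
    fun hs => (Subalgebra.mem_toSubmodule S).mpr hs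
  have hmemJm : ∀ {x : A}, x ∈ J → x ∈ Submodule.restrictScalars F J := fun hx => hx
  have hprojS : ∀ (s x : A), s ∈ S → x ∈ J →
      ((Submodule.linearProjOfIsCompl (Subalgebra.toSubmodule S)
        (Submodule.restrictScalars F J) hS (s + x) : Subalgebra.toSubmodule S) : A) = s := by
    intro s x hs hx
    have h1 : (Submodule.linearProjOfIsCompl (Subalgebra.toSubmodule S)
        (Submodule.restrictScalars F J) hS) s = ⟨s, hmemSm hs⟩ := by
      have := Submodule.linearProjOfIsCompl_apply_left hS
        (⟨s, hmemSm hs⟩ : Subalgebra.toSubmodule S)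
      exact this
    have h2 : (Submodule.linearProjOfIsCompl (Subalgebra.toSubmodule S)
        (Submodule.restrictScalars F J) hS) x = 0 :=
      Submodule.linearProjOfIsCompl_apply_right' hS (hmemJm hx)
    rw [map_add, h1, h2, add_zero]
  have hLJ : ∀ (x : A) (hx : x ∈ J), L x = lam ⟨x, hx⟩ := by
    intro x hx
    rw [hLdef]
    have h1 : (Submodule.linearProjOfIsCompl (Submodule.restrictScalars F J)
        (Subalgebra.toSubmodule S) hS.symm) x = ⟨x, hmemJm hx⟩ := by
      have := Submodule.linearProjOfIsCompl_apply_left hS.symm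
        (⟨x, hmemJm hx⟩ : Submodule.restrictScalars F J)
      exact this
    simp only [h1]
  have hLS0 : ∀ s ∈ S, L s = 0 := by
    intro s hs
    rw [hLdef]
    exact (congrArg lam (Submodule.linearProjOfIsCompl_apply_right' hS.symm (hmemSm hs))).trans
      (map_zero lam)
  have hLadd : ∀ x y : A, L (x + y) = L x + L y := by
    intro x y; rw [hLdef]; simp only [map_add]
  have hLsub : ∀ x y : A, L (x - y) = L x - L y := by
    intro x y; rw [hLdef]; simp only [map_sub]
  have hLsmul : ∀ (a : F) (x : A), L (a • x) = a * L x := by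
    intro a x; rw [hLdef]; simp only [map_smul, smul_eq_mul]
  have hL0 : L 0 = 0 := by rw [hLdef]; simp only [map_zero]
  have hLsplit : ∀ (s x : A), s ∈ S → x ∈ J → L (s + x) = L x := by
    intro s x hs hx; rw [hLadd, hLS0 s hs, zero_add]
  have hLe : ∀ (x : A) (hx : x ∈ J), L x = L (e * x * e) := by
    intro x hx
    rw [hLJ x hx, hLJ _ (hJr _ (J.mul_mem_left e hx) e)]
    exact hlam x hx
  have hLh : ∀ (h x : A), MemHePrime S e h → x ∈ J → L (h * x) = L x := by
    intro h x hm hx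
    have hhx : h * x ∈ J := J.mul_mem_left h hx
    have h1 : e * (h * x) * e = e * x * e := by
      rw [← mul_assoc e h x, hm.2.2]
    rw [hLe (h * x) hhx, h1, ← hLe x hx]
  have hLxh : ∀ (h x : A), MemHePrime S e h → x ∈ J → L (x * h) = L x := by
    intro h x hm hx
    have hxh : x * h ∈ J := hJr x hx h
    have h1 : e * (x * h) * e = e * x * e := by
      rw [mul_assoc e (x * h) e, mul_assoc x h e, hm.2.1, ← mul_assoc]
    rw [hLe (x * h) hxh, h1, ← hLe x hx]
  have hGmem : ∀ g : A, g ∈ GlamSet J hJr S e lam ↔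
      ∃ h x : A, MemHePrime S e h ∧ (x ∈ J ∧ ∀ u ∈ J, L (x * u) = 0) ∧ g = h + x := by
    intro g
    constructor
    · rintro ⟨h, x, hm, ⟨hxJ, hcond⟩, hg⟩
      exact ⟨h, x, hm, ⟨hxJ, fun u hu => by
        rw [hLJ _ (hJr x hxJ u)]; exact hcond u hu⟩, hg⟩
    · rintro ⟨h, x, hm, ⟨hxJ, hcond⟩, hg⟩
      exact ⟨h, x, hm, ⟨hxJ, fun u hu => by
        rw [← hLJ _ (hJr x hxJ u)]; exact hcond u hu⟩, hg⟩
  have hHP1 : MemHePrime S e 1 :=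
    ⟨⟨S.one_mem, 1, S.one_mem, one_mul 1, one_mul 1⟩, one_mul e, mul_one e⟩
  have hHPmul : ∀ h h' : A, MemHePrime S e h → MemHePrime S e h' → MemHePrime S e (h * h') := by
    rintro h h' ⟨⟨hS1, k, hkS, hk1, hk2⟩, he1, he2⟩ ⟨⟨hS2, k', hk'S, hk1', hk2'⟩, he1', he2'⟩
    refine ⟨⟨S.mul_mem hS1 hS2, k' * k, S.mul_mem hk'S hkS, ?_, ?_⟩, ?_, ?_⟩
    · rw [mul_assoc, ← mul_assoc h', hk1', one_mul, hk1]
    · rw [mul_assoc, ← mul_assoc k, hk2, one_mul, hk2']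
    · rw [mul_assoc, he1', he1]
    · rw [← mul_assoc, he2, he2']
  have hHPpow : ∀ h : A, MemHePrime S e h → ∀ k : ℕ, MemHePrime S e (h ^ k) := by
    intro h hm k
    induction k with
    | zero => rw [pow_zero]; exact hHP1
    | succ k ih => rw [pow_succ]; exact hHPmul _ _ ih hm
  have hθ1 : θ 1 = 1 := by
    have e1 : θ 1 = θ 1 * θ 1 := by rw [← hθmul 1 1 hHP1 hHP1, mul_one]
    exact (mul_left_cancel₀ (hθne 1 hHP1) (by rw [mul_one, ← e1])).symm
  have hθ'1 : θ' 1 = 1 := by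
    have e1 : θ' 1 = θ' 1 * θ' 1 := by rw [← hθ'mul 1 1 hHP1 hHP1, mul_one]
    exact (mul_left_cancel₀ (hθ'ne 1 hHP1) (by rw [mul_one, ← e1])).symm
  have hθpow : ∀ (θf : A → ℂ),
      (∀ h h' : A, MemHePrime S e h → MemHePrime S e h' → θf (h * h') = θf h * θf h') →
      θf 1 = 1 → ∀ (h : A), MemHePrime S e h → ∀ (k : ℕ), θf (h ^ k) = θf h ^ k := by
    intro θf hmf h1f h hm k
    induction k with
    | zero => rw [pow_zero, pow_zero, h1f]
    | succ k ih => rw [pow_succ, pow_succ, hmf _ _ (hHPpow h hm k) hm, ih]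
  have hεne0 : ∀ b : F, ε b ≠ 0 := by
    intro b hb
    have h1 : ε b * ε (-b) = 1 := by rw [← hεadd, add_neg_cancel, hε0]
    rw [hb, zero_mul] at h1
    exact zero_ne_one h1
  have hεnsmul : ∀ (k : ℕ) (b : F), ε b ^ k = ε (k • b) := by
    intro k b
    induction k with
    | zero => rw [pow_zero, zero_smul, hε0]
    | succ k ih => rw [pow_succ, ih, succ_nsmul, hεadd]
  have hεp : ∀ b : F, ε b ^ p = 1 := by
    intro b
    rw [hεnsmul p b, nsmul_eq_mul, CharP.cast_eq_zero F p, zero_mul, hε0]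
  have hconjε : ∀ b : F, (starRingEnd ℂ) (ε b) = (ε b)⁻¹ :=
    fun b => aux_conj_eq_inv hpne (hεp b)
  have hεsub : ∀ b1 b2 : F, ε b1 * (ε b2)⁻¹ = ε (b1 - b2) := by
    intro b1 b2
    rw [← div_eq_mul_inv, div_eq_iff (hεne0 b2), ← hεadd, sub_add_cancel]
  have hxi : ∀ (θf : A → ℂ) (g h x : A), MemHePrime S e h → x ∈ J → g = h + x →
      xiFun J S hS θf ε lam g = θf h * ε (L x) := by
    rintro θf g h x hm hx rfl
    simp only [xiFun]
    rw [hprojS h x hm.1.1 hx]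
    congr 1
    rw [show lam ((Submodule.linearProjOfIsCompl (Submodule.restrictScalars F J)
        (Subalgebra.toSubmodule S) hS.symm) (h + x)) = L (h + x) from by rw [hLdef]]
    rw [hLsplit h x hm.1.1 hx]
  have hGmul : ∀ a b : A, a ∈ GlamSet J hJr S e lam → b ∈ GlamSet J hJr S e lam →
      a * b ∈ GlamSet J hJr S e lam := by
    intro a b ha hb
    obtain ⟨h1, x1, hm1, ⟨hx1J, hx1c⟩, rfl⟩ := (hGmem a).mp ha
    obtain ⟨h2, x2, hm2, ⟨hx2J, hx2c⟩, rfl⟩ := (hGmem b).mp hb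
    refine (hGmem _).mpr ⟨h1 * h2, h1 * x2 + (x1 * h2 + x1 * x2), hHPmul _ _ hm1 hm2,
      ⟨J.add_mem (J.mul_mem_left _ hx2J) (J.add_mem (hJr _ hx1J h2) (J.mul_mem_left _ hx2J)),
        ?_⟩, by noncomm_ring⟩
    intro u hu
    rw [add_mul, add_mul, hLadd, hLadd]
    rw [mul_assoc h1 x2 u, hLh h1 _ hm1 (hJr _ hx2J u), hx2c u hu]
    rw [mul_assoc x1 h2 u, hx1c _ (J.mul_mem_left h2 hu)]
    rw [mul_assoc x1 x2 u, hx1c _ (J.mul_mem_left x2 hu)]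
    simp
  have hximul : ∀ (θf : A → ℂ),
      (∀ h h' : A, MemHePrime S e h → MemHePrime S e h' → θf (h * h') = θf h * θf h') →
      ∀ a b : A, a ∈ GlamSet J hJr S e lam → b ∈ GlamSet J hJr S e lam →
      xiFun J S hS θf ε lam (a * b) = xiFun J S hS θf ε lam a * xiFun J S hS θf ε lam b := by
    intro θf hmf a b ha hb
    obtain ⟨h1, x1, hm1, ⟨hx1J, hx1c⟩, rfl⟩ := (hGmem a).mp ha
    obtain ⟨h2, x2, hm2, ⟨hx2J, hx2c⟩, rfl⟩ := (hGmem b).mp hb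
    have hxJ : h1 * x2 + (x1 * h2 + x1 * x2) ∈ J :=
      J.add_mem (J.mul_mem_left _ hx2J) (J.add_mem (hJr _ hx1J h2) (J.mul_mem_left _ hx2J))
    have hprod : (h1 + x1) * (h2 + x2) = (h1 * h2) + (h1 * x2 + (x1 * h2 + x1 * x2)) := by
      noncomm_ring
    rw [hxi θf _ _ _ (hHPmul _ _ hm1 hm2) hxJ hprod,
        hxi θf _ _ _ hm1 hx1J rfl, hxi θf _ _ _ hm2 hx2J rfl]
    rw [hmf _ _ hm1 hm2]
    have hLtot : L (h1 * x2 + (x1 * h2 + x1 * x2)) = L x2 + L x1 := by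
      rw [hLadd, hLadd, hLh h1 x2 hm1 hx2J, hLxh h2 x1 hm2 hx1J, hx1c x2 hx2J, add_zero]
    rw [hLtot, hεadd]
    ring
  obtain ⟨n, hn⟩ := aux_jac_pow_eq_bot (F := F) (A := A) J hJ hJr
  -- core vanishing lemma
  have hZ : ∀ w : Aˣ, (∑ u : Aˣ,
      if (((u : Aˣ) : A) ∈ GlamSet J hJr S e lam ∧
          ((w⁻¹ * u * w : Aˣ) : A) ∈ GlamSet J hJr S e lam)
      then xiFun J S hS θ ε lam ((u : Aˣ) : A) *
        (starRingEnd ℂ) (xiFun J S hS θ' ε lam ((w⁻¹ * u * w : Aˣ) : A))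
      else 0) = 0 := by
    intro w
    set W : A := ((w : Aˣ) : A) with hW
    set Wi : A := ((w⁻¹ : Aˣ) : A) with hWi
    have hWiW : Wi * W = 1 := by rw [hWi, hW]; exact Units.inv_mul w
    have hWWi : W * Wi = 1 := by rw [hWi, hW]; exact Units.mul_inv w
    have hcan1 : ∀ z : A, W * (Wi * z) = z := fun z => by rw [← mul_assoc, hWWi, one_mul]
    have hcan2 : ∀ z : A, Wi * (W * z) = z := fun z => by rw [← mul_assoc, hWiW, one_mul]
    set cj : A → A := fun x => Wi * x * W with hcj
    have hcjmul : ∀ x y : A, cj (x * y) = cj x * cj y := by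
      intro x y
      show Wi * (x * y) * W = (Wi * x * W) * (Wi * y * W)
      simp only [mul_assoc]
      rw [hcan1]
    have hcjone : cj 1 = 1 := by show Wi * 1 * W = 1; rw [mul_one, hWiW]
    have hcjadd : ∀ x y : A, cj (x + y) = cj x + cj y := by
      intro x y; show Wi * (x + y) * W = Wi * x * W + Wi * y * W
      rw [mul_add, add_mul]
    have hcjsub : ∀ x y : A, cj (x - y) = cj x - cj y := by
      intro x y; show Wi * (x - y) * W = Wi * x * W - Wi * y * W
      rw [mul_sub, sub_mul]
    have hcjsmul : ∀ (a : F) (x : A), cj (a • x) = a • cj x := by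
      intro a x; show Wi * (a • x) * W = a • (Wi * x * W)
      rw [mul_smul_comm, smul_mul_assoc]
    have hcjJ : ∀ x ∈ J, cj x ∈ J := fun x hx => hJr _ (J.mul_mem_left Wi hx) W
    have hcjU : ∀ u : Aˣ, ((w⁻¹ * u * w : Aˣ) : A) = cj ((u : Aˣ) : A) := by
      intro u
      show _ = Wi * ((u : Aˣ) : A) * W
      rw [Units.val_mul, Units.val_mul]
    have hcnd_mul : ∀ u v : Aˣ,
        (((u : Aˣ) : A) ∈ GlamSet J hJr S e lam ∧
          ((w⁻¹ * u * w : Aˣ) : A) ∈ GlamSet J hJr S e lam) →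
        (((v : Aˣ) : A) ∈ GlamSet J hJr S e lam ∧
          ((w⁻¹ * v * w : Aˣ) : A) ∈ GlamSet J hJr S e lam) →
        (((u * v : Aˣ) : A) ∈ GlamSet J hJr S e lam ∧
          ((w⁻¹ * (u * v) * w : Aˣ) : A) ∈ GlamSet J hJr S e lam) := by
      intro u v hu hv
      constructor
      · rw [Units.val_mul]; exact hGmul _ _ hu.1 hv.1
      · have hsplit : w⁻¹ * (u * v) * w = (w⁻¹ * u * w) * (w⁻¹ * v * w) := by group
        rw [hsplit, Units.val_mul]; exact hGmul _ _ hu.2 hv.2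
    have hφ_mul : ∀ u v : Aˣ,
        (((u : Aˣ) : A) ∈ GlamSet J hJr S e lam ∧
          ((w⁻¹ * u * w : Aˣ) : A) ∈ GlamSet J hJr S e lam) →
        (((v : Aˣ) : A) ∈ GlamSet J hJr S e lam ∧
          ((w⁻¹ * v * w : Aˣ) : A) ∈ GlamSet J hJr S e lam) →
        xiFun J S hS θ ε lam ((u * v : Aˣ) : A) *
          (starRingEnd ℂ) (xiFun J S hS θ' ε lam ((w⁻¹ * (u * v) * w : Aˣ) : A))
        = (xiFun J S hS θ ε lam ((u : Aˣ) : A) *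
            (starRingEnd ℂ) (xiFun J S hS θ' ε lam ((w⁻¹ * u * w : Aˣ) : A))) *
          (xiFun J S hS θ ε lam ((v : Aˣ) : A) *
            (starRingEnd ℂ) (xiFun J S hS θ' ε lam ((w⁻¹ * v * w : Aˣ) : A))) := by
      intro u v hu hv
      have hsplit : w⁻¹ * (u * v) * w = (w⁻¹ * u * w) * (w⁻¹ * v * w) := by group
      rw [Units.val_mul, hximul θ hθmul _ _ hu.1 hv.1, hsplit, Units.val_mul,
          hximul θ' hθ'mul _ _ hu.2 hv.2, map_mul]
      ring
    by_cases hstar : ∀ x : A, (x ∈ J ∧ ∀ u ∈ J, L (x * u) = 0) →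
        (cj x ∈ J ∧ ∀ u ∈ J, L (cj x * u) = 0) → L (cj x) = L x
    · -- case B : use h₀
      obtain ⟨h₀, hm₀, hneq₀⟩ := hne
      obtain ⟨hS₀, k₀, hk₀S, hk₀1, hk₀2⟩ := hm₀.1
      set v₀ : Aˣ := ⟨h₀, k₀, hk₀1, hk₀2⟩ with hv₀def
      have hval₀ : ((v₀ : Aˣ) : A) = h₀ := rfl
      have hGt : ∀ (d k : ℕ) (t : A), n ≤ k + d → t ∈ J →
          t ∈ (Submodule.restrictScalars F J) ^ k → L (cj h₀ * t) = L t := by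
        intro d
        induction d with
        | zero =>
          intro k t hk htJ htk
          obtain ⟨m, hm⟩ := Nat.exists_eq_add_of_le (by omega : n ≤ k)
          rw [hm, pow_add, hn, Submodule.bot_mul, Submodule.mem_bot] at htk
          rw [htk, mul_zero]
        | succ d ih =>
          intro k t hk htJ htk
          have hzJ : W * t * Wi ∈ J := hJr _ (J.mul_mem_left W htJ) Wi
          have hcjz : cj (W * t * Wi) = t := by
            show Wi * (W * t * Wi) * W = t
            rw [show W * t * Wi = W * (t * Wi) from mul_assoc W t Wi]
            rw [hcan2 (t * Wi), mul_assoc, hWiW, mul_one]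
          have hPxt : ((h₀ - 1) * (W * t * Wi)) ∈ J ∧
              ∀ u ∈ J, L (((h₀ - 1) * (W * t * Wi)) * u) = 0 := by
            refine ⟨J.mul_mem_left _ hzJ, fun u hu => ?_⟩
            have hexp : ((h₀ - 1) * (W * t * Wi)) * u
                = h₀ * ((W * t * Wi) * u) - (W * t * Wi) * u := by noncomm_ring
            rw [hexp, hLsub, hLh h₀ _ hm₀ (hJr _ hzJ u), sub_self]
          have hcjxt : cj ((h₀ - 1) * (W * t * Wi)) = cj h₀ * t - t := by
            rw [hcjmul, hcjz, hcjsub, hcjone, sub_mul, one_mul]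
          have hPcxt : cj ((h₀ - 1) * (W * t * Wi)) ∈ J ∧
              ∀ u ∈ J, L (cj ((h₀ - 1) * (W * t * Wi)) * u) = 0 := by
            rw [hcjxt]
            refine ⟨J.sub_mem (J.mul_mem_left _ htJ) htJ, fun u hu => ?_⟩
            have htu : t * u ∈ (Submodule.restrictScalars F J) ^ (k + 1) := by
              rw [pow_succ]; exact Submodule.mul_mem_mul htk hu
            have hexp : (cj h₀ * t - t) * u = cj h₀ * (t * u) - t * u := by noncomm_ring
            rw [hexp, hLsub, ih (k + 1) (t * u) (by omega) (hJr t htJ u) htu, sub_self]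
          have hkey := hstar _ hPxt hPcxt
          rw [hcjxt] at hkey
          have hr : L ((h₀ - 1) * (W * t * Wi)) = 0 := by
            have hexp : (h₀ - 1) * (W * t * Wi) = h₀ * (W * t * Wi) - (W * t * Wi) := by
              noncomm_ring
            rw [hexp, hLsub, hLh h₀ _ hm₀ hzJ, sub_self]
          rw [hr, hLsub] at hkey
          exact sub_eq_zero.mp hkey
      have hG : ∀ t ∈ J, L (cj h₀ * t) = L t := fun t ht =>
        hGt n 1 t (by omega) ht (by rw [pow_one]; exact ht)
      have hj₀J : cj h₀ - h₀ ∈ J := by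
        have hcomm := hred Wi (h₀ * W)
        have h2 : (h₀ * W) * Wi = h₀ := by rw [mul_assoc, hWWi, mul_one]
        have h3 : Wi * (h₀ * W) = cj h₀ := by show _ = Wi * h₀ * W; rw [mul_assoc]
        rwa [h2, h3] at hcomm
      have hPlj₀ : (cj h₀ - h₀ ∈ J) ∧ ∀ u ∈ J, L ((cj h₀ - h₀) * u) = 0 := by
        refine ⟨hj₀J, fun u hu => ?_⟩
        rw [sub_mul, hLsub, hG u hu, hLh h₀ u hm₀ hu, sub_self]
      have hval₂ : ((w⁻¹ * v₀ * w : Aˣ) : A) = h₀ + (cj h₀ - h₀) := by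
        rw [hcjU, hval₀]; abel
      have hc1 : ((v₀ : Aˣ) : A) ∈ GlamSet J hJr S e lam := by
        rw [hval₀]
        exact (hGmem _).mpr ⟨h₀, 0, hm₀,
          ⟨J.zero_mem, fun u hu => by rw [zero_mul, hL0]⟩, (add_zero h₀).symm⟩
      have hc2 : ((w⁻¹ * v₀ * w : Aˣ) : A) ∈ GlamSet J hJr S e lam := by
        rw [hval₂]
        exact (hGmem _).mpr ⟨h₀, cj h₀ - h₀, hm₀, hPlj₀, rfl⟩
      refine aux_sum_hom_eq_zero _ _ hcnd_mul hφ_mul v₀ ⟨hc1, hc2⟩ ?_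
      rw [hxi θ _ h₀ 0 hm₀ J.zero_mem (hval₀.trans (add_zero h₀).symm),
          hxi θ' _ h₀ (cj h₀ - h₀) hm₀ hj₀J hval₂]
      rw [hL0, hε0, mul_one, map_mul]
      intro hcontra
      set b : F := L (cj h₀ - h₀) with hbdef
      set m : ℕ := orderOf v₀ with hmdef
      have hm0 : m ≠ 0 := (orderOf_pos v₀).ne'
      have hpowval : ∀ k : ℕ, ((v₀ ^ k : Aˣ) : A) = h₀ ^ k := by
        intro k; rw [Units.val_pow_eq_pow_val, hval₀]
      have h₀m : h₀ ^ m = 1 := by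
        rw [← hpowval m, hmdef, pow_orderOf_eq_one, Units.val_one]
      have hθm : θ h₀ ^ m = 1 := by
        rw [← hθpow θ hθmul hθ1 h₀ hm₀ m, h₀m, hθ1]
      have hθ'm : θ' h₀ ^ m = 1 := by
        rw [← hθpow θ' hθ'mul hθ'1 h₀ hm₀ m, h₀m, hθ'1]
      have hζm : (θ h₀ * (starRingEnd ℂ) (θ' h₀)) ^ m = 1 := by
        rw [mul_pow, hθm, one_mul, ← map_pow, hθ'm, map_one]
      have hωp : ((starRingEnd ℂ) (ε b)) ^ p = 1 := by rw [← map_pow, hεp, map_one]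
      have hζeq : θ h₀ * (starRingEnd ℂ) (θ' h₀) = ((starRingEnd ℂ) (ε b))⁻¹ := by
        apply eq_inv_of_mul_eq_one_left
        rw [mul_assoc]; exact hcontra
      have hζp : (θ h₀ * (starRingEnd ℂ) (θ' h₀)) ^ p = 1 := by
        rw [hζeq, inv_pow, hωp, inv_one]
      have hcop : Nat.Coprime m p := by
        rcases Nat.coprime_or_dvd_of_prime hpP.out m with hc | hdvd
        · exact hc.symm
        · exfalso
          have hk : orderOf (v₀ ^ (m / p)) = p := by
            have heq := IsOfFinOrder.orderOf_pow v₀ (m / p) (isOfFinOrder_of_finite v₀)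
            rw [heq, ← hmdef, Nat.gcd_eq_right (Nat.div_dvd_of_dvd hdvd),
              Nat.div_div_self hdvd hm0]
          have hv₁ne : v₀ ^ (m / p) ≠ 1 := by
            intro hcon; rw [hcon, orderOf_one] at hk; exact hpP.out.ne_one hk.symm
          have hv₁S : ((v₀ ^ (m / p) : Aˣ) : A) ∈ S := by
            rw [hpowval]; exact pow_mem hS₀ _
          have hnil : (((v₀ ^ (m / p) : Aˣ) : A) - 1) ^ p = 0 := by
            rw [sub_pow_char_of_commute p (Commute.one_right _), one_pow]
            have hp1 := pow_orderOf_eq_one (v₀ ^ (m / p))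
            rw [hk] at hp1
            rw [← Units.val_pow_eq_pow_val, hp1, Units.val_one, sub_self]
          have hmemJ : ((v₀ ^ (m / p) : Aˣ) : A) - 1 ∈ J :=
            aux_mem_jac_of_nilpotent hJ hJr hred hnil
          have hmemS : ((v₀ ^ (m / p) : Aˣ) : A) - 1 ∈ S := S.sub_mem hv₁S S.one_mem
          have hzero : ((v₀ ^ (m / p) : Aˣ) : A) - 1 = 0 :=
            Submodule.disjoint_def.mp hS.disjoint _
              ((Subalgebra.mem_toSubmodule S).mpr hmemS) hmemJ
          exact hv₁ne (Units.ext (by rwa [sub_eq_zero] at hzero))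
      have hζ1 : θ h₀ * (starRingEnd ℂ) (θ' h₀) = 1 :=
        aux_eq_one_of_pow_eq_one hcop hζm hζp
      have hθ'inv : (starRingEnd ℂ) (θ' h₀) = (θ' h₀)⁻¹ := aux_conj_eq_inv hm0 hθ'm
      rw [hθ'inv, mul_inv_eq_one₀ (hθ'ne h₀ hm₀)] at hζ1
      exact hneq₀ hζ1
    · -- case A : nontrivial on the N-part
      push_neg at hstar
      obtain ⟨x, hPx, hPcx, hLne⟩ := hstar
      obtain ⟨a, ha⟩ := hεnt
      have hcne : L x - L (cj x) ≠ 0 := sub_ne_zero.mpr (Ne.symm hLne)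
      set α : F := a * (L x - L (cj x))⁻¹ with hα
      set x' : A := α • x with hx'
      have hx'J : x' ∈ J := by
        rw [hx', Algebra.smul_def]; exact J.mul_mem_left _ hPx.1
      have hx'c : ∀ u ∈ J, L (x' * u) = 0 := by
        intro u hu
        rw [hx', smul_mul_assoc, hLsmul, hPx.2 u hu, mul_zero]
      have hcjx' : cj x' = α • cj x := by rw [hx']; exact hcjsmul α x
      have hcjx'J : cj x' ∈ J := hcjJ _ hx'J
      have hcjx'c : ∀ u ∈ J, L (cj x' * u) = 0 := by
        intro u hu
        rw [hcjx', smul_mul_assoc, hLsmul, hPcx.2 u hu, mul_zero]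
      have hLdiff : L x' - L (cj x') = a := by
        rw [hx', hcjx', hLsmul, hLsmul, ← mul_sub, hα]
        field_simp
      have hxunit : IsUnit (1 + x') := by
        refine aux_isUnit_one_add ?_
        rw [← hJ]; exact hx'J
      have hval : ((hxunit.unit : Aˣ) : A) = 1 + x' := hxunit.unit_spec
      have hval2 : ((w⁻¹ * hxunit.unit * w : Aˣ) : A) = 1 + cj x' := by
        rw [hcjU, hval, hcjadd, hcjone]
      have hc1 : ((hxunit.unit : Aˣ) : A) ∈ GlamSet J hJr S e lam := by
        rw [hval]
        exact (hGmem _).mpr ⟨1, x', hHP1, ⟨hx'J, hx'c⟩, rfl⟩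
      have hc2 : ((w⁻¹ * hxunit.unit * w : Aˣ) : A) ∈ GlamSet J hJr S e lam := by
        rw [hval2]
        exact (hGmem _).mpr ⟨1, cj x', hHP1, ⟨hcjx'J, hcjx'c⟩, rfl⟩
      refine aux_sum_hom_eq_zero _ _ hcnd_mul hφ_mul hxunit.unit ⟨hc1, hc2⟩ ?_
      rw [hxi θ _ 1 x' hHP1 hx'J hval, hxi θ' _ 1 (cj x') hHP1 hcjx'J hval2]
      rw [hθ1, hθ'1, one_mul, one_mul, hconjε, hεsub, hLdiff]
      exact ha
  -- now the summation bookkeeping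
  suffices hTot : ∑ᶠ (g : Aˣ), chiFun J hJr S hS e θ ε lam ((g : Aˣ) : A) *
      (starRingEnd ℂ) (chiFun J hJr S hS e θ' ε lam ((g : Aˣ) : A)) = 0 by
    rw [hTot, mul_zero]
  rw [finsum_eq_sum_of_fintype]
  have hchi : ∀ (θf : A → ℂ) (g : A), chiFun J hJr S hS e θf ε lam g
      = (Nat.card (GlamSet J hJr S e lam) : ℂ)⁻¹ *
        ∑ s : Aˣ, (if ((s⁻¹ : Aˣ) : A) * g * ((s : Aˣ) : A) ∈ GlamSet J hJr S e lam
          then xiFun J S hS θf ε lam (((s⁻¹ : Aˣ) : A) * g * ((s : Aˣ) : A)) else 0) := by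
    intro θf g
    simp only [chiFun]
    rw [finsum_mem_def, finsum_eq_sum_of_fintype]
    congr 1
  have hsummand : ∀ g : A,
      chiFun J hJr S hS e θ ε lam g * (starRingEnd ℂ) (chiFun J hJr S hS e θ' ε lam g)
      = ((Nat.card (GlamSet J hJr S e lam) : ℂ)⁻¹ *
          (starRingEnd ℂ) ((Nat.card (GlamSet J hJr S e lam) : ℂ)⁻¹)) *
        ((∑ s : Aˣ, (if ((s⁻¹ : Aˣ) : A) * g * ((s : Aˣ) : A) ∈ GlamSet J hJr S e lam
            then xiFun J S hS θ ε lam (((s⁻¹ : Aˣ) : A) * g * ((s : Aˣ) : A)) else 0)) *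
          (∑ t : Aˣ, (if ((t⁻¹ : Aˣ) : A) * g * ((t : Aˣ) : A) ∈ GlamSet J hJr S e lam
            then (starRingEnd ℂ)
              (xiFun J S hS θ' ε lam (((t⁻¹ : Aˣ) : A) * g * ((t : Aˣ) : A))) else 0))) := by
    intro g
    have hconjsum : (∑ t : Aˣ, (starRingEnd ℂ)
          (if ((t⁻¹ : Aˣ) : A) * g * ((t : Aˣ) : A) ∈ GlamSet J hJr S e lam
            then xiFun J S hS θ' ε lam (((t⁻¹ : Aˣ) : A) * g * ((t : Aˣ) : A)) else 0))
        = ∑ t : Aˣ, (if ((t⁻¹ : Aˣ) : A) * g * ((t : Aˣ) : A) ∈ GlamSet J hJr S e lam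
            then (starRingEnd ℂ)
              (xiFun J S hS θ' ε lam (((t⁻¹ : Aˣ) : A) * g * ((t : Aˣ) : A))) else 0) :=
      Finset.sum_congr rfl (fun t _ => by rw [apply_ite (starRingEnd ℂ), map_zero])
    rw [hchi θ g, hchi θ' g, map_mul, map_sum, hconjsum]
    ring
  rw [Finset.sum_congr rfl (fun g _ => hsummand ((g : Aˣ) : A)), ← Finset.mul_sum]
  refine mul_eq_zero_of_right _ ?_
  rw [Finset.sum_congr rfl (fun g _ => Finset.sum_mul_sum Finset.univ Finset.univ _ _)]
  rw [Finset.sum_comm]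
  rw [Finset.sum_congr rfl (fun s _ => Finset.sum_comm)]
  refine Finset.sum_eq_zero fun s _ => Finset.sum_eq_zero fun t _ => ?_
  have hbij : Function.Bijective (fun u : Aˣ => s * u * s⁻¹) := by
    have hco : (fun u : Aˣ => s * u * s⁻¹)
        = (fun v : Aˣ => v * s⁻¹) ∘ (fun u : Aˣ => s * u) := rfl
    rw [hco]
    exact (Equiv.mulRight (s⁻¹ : Aˣ)).bijective.comp (Equiv.mulLeft s).bijective
  rw [← Fintype.sum_bijective (fun u : Aˣ => s * u * s⁻¹) hbij _ _ (fun u => rfl)]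
  refine (Finset.sum_congr rfl (fun u _ => ?_)).trans (hZ (s⁻¹ * t))
  have he1 : ((s⁻¹ : Aˣ) : A) * ((s * u * s⁻¹ : Aˣ) : A) * ((s : Aˣ) : A)
      = ((u : Aˣ) : A) := by
    rw [← Units.val_mul, ← Units.val_mul]
    congr 1
    group
  have he2 : ((t⁻¹ : Aˣ) : A) * ((s * u * s⁻¹ : Aˣ) : A) * ((t : Aˣ) : A)
      = (((s⁻¹ * t)⁻¹ * u * (s⁻¹ * t) : Aˣ) : A) := by
    rw [← Units.val_mul, ← Units.val_mul]
    congr 1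
    group
  rw [he1, he2]
  by_cases h1 : ((u : Aˣ) : A) ∈ GlamSet J hJr S e lam <;>
    by_cases h2 : (((s⁻¹ * t)⁻¹ * u * (s⁻¹ * t) : Aˣ) : A) ∈ GlamSet J hJr S e lam <;>
    simp [h1, h2]
end
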